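/- arXiv:1010.3394 — 2 statements merged into one kernel-verified Lean document; each statement's English description precedes it below -/
import Mathlib

section
/- Let l ≥ 3 and let p = (p_1,…,p_l) with integers p_1,…,p_l ≥ 2. Let 𝔅_p be the set of tuples (J_1,…,J_l) ∈ 𝔅_{n,p_1} × ⋯ × 𝔅_{n,p_l} such that (i) every element of the multiset union ⋃_{i=1}^l S_{J_i} has multiplicity at least two in the union, (ii) J_1,…,J_l form a cluster, and (iii) 0 ∉ ⋃_{i=1}^l S_{J_i}. Then card(𝔅_p) = o(b_n^{(p_1+⋯+p_l−l)/2}) as n → ∞. -/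
open MeasureTheory Finset Filter ProbabilityTheory Topology
open scoped Classical Topology

noncomputable section

namespace RTM

/-- Indicator function of the real interval `[a, b]`. -/
def chi (a b t : ℝ) : ℝ := if a ≤ t ∧ t ≤ b then 1 else 0

/-- `blk` encodes a partition of `{0, …, N-1}` (as `Fin N`): `blk i` is the least element of
the block containing `i`. -/
def IsPartMap {N : ℕ} (blk : Fin N → Fin N) : Prop :=
  (∀ i, blk i ≤ i) ∧ (∀ i, blk (blk i) = blk i)

/-- The block of the partition containing `i`. -/
def block {N : ℕ} (blk : Fin N → Fin N) (i : Fin N) : Finset (Fin N) :=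
  univ.filter fun j => blk j = blk i

/-- Pair partitions: every block has exactly two elements. -/
def IsPairPartition {N : ℕ} (blk : Fin N → Fin N) : Prop :=
  IsPartMap blk ∧ ∀ i, (block blk i).card = 2

/-- `P₂(p,q)`: pair partitions of `{0, …, p+q-1}` with at least one crossing match, i.e. a
block meeting both `{0,…,p-1}` and `{p,…,p+q-1}`. -/
def IsP2Cross {N : ℕ} (p : ℕ) (blk : Fin N → Fin N) : Prop :=
  IsPairPartition blk ∧ ∃ i j : Fin N, (i : ℕ) < p ∧ p ≤ (j : ℕ) ∧ blk i = blk j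

/-- `P_{2,4}(p,q)`: partitions of `{0, …, p+q-1}` with one block of size 4 having two elements
in each half, all other blocks of size 2 and contained in one of the two halves. -/
def IsP24 {N : ℕ} (p : ℕ) (blk : Fin N → Fin N) : Prop :=
  IsPartMap blk ∧
    ∃ i0 : Fin N, (block blk i0).card = 4 ∧
      ((block blk i0).filter fun i => (i : ℕ) < p).card = 2 ∧
      ∀ i : Fin N, blk i ≠ blk i0 →
        (block blk i).card = 2 ∧
          ((∀ j ∈ block blk i, (j : ℕ) < p) ∨ ∀ j ∈ block blk i, p ≤ (j : ℕ))

/-- `ε_π(i) = 1` if `i` is the least element of its block, `-1` otherwise. -/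
def eps {N : ℕ} (blk : Fin N → Fin N) (i : Fin N) : ℝ := if blk i = i then 1 else -1

/-- `τ_π(i) = 1` if `i` is the least element of its block, or the largest element of a block of
size 4; `-1` otherwise. -/
def tau {N : ℕ} (blk : Fin N → Fin N) (i : Fin N) : ℝ :=
  if blk i = i ∨ ((block blk i).card = 4 ∧ ∀ j ∈ block blk i, j ≤ i) then 1 else -1

/-- The `y`-variables obtained from the `x`-variables (one for each block, indexed by the least
element of the block) via `y i = s i * x (blk i)` where `s` is the sign function (`ε_π`/`τ_π`). -/
def yvar {N : ℕ} (blk : Fin N → Fin N) (s : Fin N → ℝ) (x : Fin N → ℝ) (i : Fin N) : ℝ :=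
  s i * x (blk i)

/-- Product measure on the `x`-variables: Lebesgue measure on the coordinates indexed by least
elements of blocks (one coordinate for each block), and the Dirac mass at `0` on the remaining
(unused) coordinates.  Integrating against it realizes the multiple integral over the block
variables `x_1, …, x_{#blocks}`. -/
def repMeasure (N : ℕ) (blk : Fin N → Fin N) : Measure (Fin N → ℝ) :=
  haveI : ∀ i : Fin N,
      SigmaFinite (if blk i = i then (volume : Measure ℝ) else Measure.dirac 0) := fun i => by
    split <;> infer_instance
  Measure.pi fun i => if blk i = i then (volume : Measure ℝ) else Measure.dirac 0

/-- Partial sum `y_1 + ⋯ + y_{j+1}` (0-indexed: entries with index `≤ j`). -/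
def psum1 {N : ℕ} (y : Fin N → ℝ) (j : ℕ) : ℝ :=
  ∑ i ∈ univ.filter (fun i : Fin N => (i : ℕ) ≤ j), y i

/-- Partial sum `y_{p+1} + ⋯ + y_{j+1}` (0-indexed: entries with `p ≤ index ≤ j`). -/
def psum2 {N : ℕ} (y : Fin N → ℝ) (p j : ℕ) : ℝ :=
  ∑ i ∈ univ.filter (fun i : Fin N => p ≤ (i : ℕ) ∧ (i : ℕ) ≤ j), y i

/-- Coefficient of the block variable `x_r` in `y_1 + ⋯ + y_p`. -/
def ccoef {N : ℕ} (blk : Fin N → Fin N) (s : Fin N → ℝ) (p : ℕ) (r : Fin N) : ℝ :=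
  ∑ i ∈ univ.filter (fun i : Fin N => (i : ℕ) < p ∧ blk i = r), s i

/-- The type I integral `f_I^∓(π)` (`sgn = 1` gives `f_I^-`, `sgn = -1` gives `f_I^+`):
the Dirac delta `δ(y_1 + ⋯ + y_p)` is evaluated by solving the linear constraint for the block
variable `x_{r0}` (`r0` the least block index occurring with a nonzero coefficient), which
produces the Jacobian factor `|c(r0)|⁻¹`; the auxiliary factor `(2)⁻¹ ∫ χ_{[-1,1]}(x_{r0})` is
a normalization eliminating the then-unused coordinate `x_{r0}`. -/
def fI {N : ℕ} (blk : Fin N → Fin N) (p : ℕ) (b sgn : ℝ) : ℝ :=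
  if h : (univ.filter fun r : Fin N => blk r = r ∧ ccoef blk (eps blk) p r ≠ 0).Nonempty then
    (2 * |ccoef blk (eps blk) p
        ((univ.filter fun r : Fin N => blk r = r ∧ ccoef blk (eps blk) p r ≠ 0).min' h)|)⁻¹ *
      ∫ z : ℝ × ℝ × (Fin N → ℝ),
        (fun r0 : Fin N =>
          (fun x : Fin N → ℝ =>
            chi 0 1 z.1 * chi 0 1 z.2.1 * (∏ r : Fin N, chi (-1) 1 (z.2.2 r)) *
              chi (-1) 1 (x r0) *
              (∏ j ∈ range p, chi 0 1 (z.1 + b * psum1 (yvar blk (eps blk) x) j)) *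
              ∏ j ∈ Finset.Ico p N,
                chi 0 1 (z.2.1 + sgn * (b * psum2 (yvar blk (eps blk) x) p j)))
          (Function.update z.2.2 r0
            (-(∑ r ∈ univ.erase r0, ccoef blk (eps blk) p r * z.2.2 r) /
              ccoef blk (eps blk) p r0)))
        ((univ.filter fun r : Fin N => blk r = r ∧ ccoef blk (eps blk) p r ≠ 0).min' h)
        ∂((volume : Measure ℝ).prod ((volume : Measure ℝ).prod (repMeasure N blk)))
  else 0

/-- The type II integral `f_{II}^∓(π)` (`sgn = 1` gives `f_{II}^-`, `sgn = -1` gives `f_{II}^+`). -/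
def fII {N : ℕ} (blk : Fin N → Fin N) (p : ℕ) (b sgn : ℝ) : ℝ :=
  ∫ z : ℝ × ℝ × (Fin N → ℝ),
    chi 0 1 z.1 * chi 0 1 z.2.1 * (∏ r : Fin N, chi (-1) 1 (z.2.2 r)) *
      (∏ j ∈ range p, chi 0 1 (z.1 + b * psum1 (yvar blk (tau blk) z.2.2) j)) *
      ∏ j ∈ Finset.Ico p N,
        chi 0 1 (z.2.1 + sgn * (b * psum2 (yvar blk (tau blk) z.2.2) p j))
    ∂((volume : Measure ℝ).prod ((volume : Measure ℝ).prod (repMeasure N blk)))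

/-- The limiting covariance `σ_{p,q}` (for `p + q` even; for `p + q` odd all the index sets
below are empty and the expression vanishes). -/
def sigmaPQ (κ b : ℝ) (p q : ℕ) : ℝ :=
  (∑ blk ∈ (univ : Finset (Fin (p + q) → Fin (p + q))).filter (IsP2Cross p),
      (fI blk p b 1 + fI blk p b (-1))) +
    (κ - 1) * ∑ blk ∈ (univ : Finset (Fin (p + q) → Fin (p + q))).filter (IsP24 p),
      (fII blk p b 1 + fII blk p b (-1))

/-- `σ_{p,q}` extended by `0` to odd `p+q`. -/
def sigmaCov (κ b : ℝ) (p q : ℕ) : ℝ := if Even (p + q) then sigmaPQ κ b p q else 0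

/-- The limiting moment `M_N` (nonzero only for even `N`). -/
def Mmoment (b : ℝ) (N : ℕ) : ℝ :=
  ∑ blk ∈ (univ : Finset (Fin N → Fin N)).filter IsPairPartition,
    ∫ z : ℝ × (Fin N → ℝ),
      chi 0 1 z.1 * (∏ r : Fin N, chi (-1) 1 (z.2 r)) *
        ∏ j ∈ range N, chi 0 1 (z.1 + b * psum1 (yvar blk (eps blk) z.2) j)
      ∂((volume : Measure ℝ).prod (repMeasure N blk))

/-- Toeplitz band matrix `(η_{ij} a_{i-j})_{i,j=1}^n` with bandwidth `bn`. -/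
def toeplitzBand {α : Type*} [Zero α] (n bn : ℕ) (a : ℤ → α) :
    Matrix (Fin n) (Fin n) α :=
  Matrix.of fun i j => if |((i : ℕ) : ℤ) - ((j : ℕ) : ℤ)| ≤ (bn : ℤ) then
    a (((i : ℕ) : ℤ) - ((j : ℕ) : ℤ)) else 0

/-- The symmetric symbol with zero diagonal entry built from `{a_j}_{j ≥ 1}`. -/
def symb {Ω : Type*} (a : ℕ → Ω → ℝ) (ω : Ω) (d : ℤ) : ℝ :=
  if d = 0 then 0 else a d.natAbs ω

/-- The normalized random symmetric Toeplitz band matrix `A_n = T_n/√b_n`. -/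
def matA {Ω : Type*} (a : ℕ → Ω → ℝ) (bn : ℕ → ℕ) (n : ℕ) (ω : Ω) :
    Matrix (Fin n) (Fin n) ℝ :=
  (Real.sqrt (bn n))⁻¹ • toeplitzBand n (bn n) (symb a ω)

/-- The linear eigenvalue statistic `ω_p = (√b_n/n) (tr A_n^p − E tr A_n^p)`. -/
def omegaP {Ω : Type*} [MeasurableSpace Ω] (μ : Measure Ω) (a : ℕ → Ω → ℝ) (bn : ℕ → ℕ)
    (p n : ℕ) (ω : Ω) : ℝ :=
  Real.sqrt (bn n) / n *
    (Matrix.trace (matA a bn n ω ^ p) - ∫ ω', Matrix.trace (matA a bn n ω' ^ p) ∂μ)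

/-- Convergence in distribution of real random variables to the law `ν`: convergence of the
integrals of all bounded continuous test functions. -/
def ConvInDist {Ω : Type*} [MeasurableSpace Ω] (μ : Measure Ω) (X : ℕ → Ω → ℝ)
    (ν : Measure ℝ) : Prop :=
  ∀ g : BoundedContinuousFunction ℝ ℝ,
    Tendsto (fun n => ∫ ω, g (X n ω) ∂μ) atTop (𝓝 (∫ x, g x ∂ν))


/-- A vector `J = (j_1, …, j_p)` is balanced: `j_1 + ⋯ + j_p = 0`. -/
def Balanced {p : ℕ} (J : Fin p → ℤ) : Prop := (∑ u : Fin p, J u) = 0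

/-- Two vectors are correlated if their projections (multisets of absolute values of entries)
have an element in common. -/
def Correlated {p q : ℕ} (J : Fin p → ℤ) (K : Fin q → ℤ) : Prop :=
  ∃ (u : Fin p) (v : Fin q), (J u).natAbs = (K v).natAbs

/-- The vectors `J_1, …, J_l` form a (single) cluster: any two of them are joined by a chain of
consecutively correlated vectors. -/
def IsCluster {l : ℕ} {pp : Fin l → ℕ} (T : ∀ t : Fin l, Fin (pp t) → ℤ) : Prop :=
  ∀ s t : Fin l, Relation.ReflTransGen (fun u v => Correlated (T u) (T v)) s t

/-- The vectors `J ∈ {±1, …, ±bn}^p`. -/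
def BFinset (bn p : ℕ) : Finset (Fin p → ℤ) :=
  Fintype.piFinset fun _ : Fin p => (Finset.Icc (-(bn : ℤ)) (bn : ℤ)).erase 0


section Aux
set_option linter.unusedSectionVars false
variable {τ ι : Type*} [Fintype τ] [DecidableEq τ] [Fintype ι] [DecidableEq ι]

noncomputable def csupp (C : τ → ι → ℚ) (r : ι) : Finset τ := univ.filter (fun t => C t r ≠ 0)

noncomputable def USet (C : τ → ι → ℚ) : Finset τ := univ.filter (fun t => ¬ ∀ r, C t r = 0)

lemma mem_USet {C : τ → ι → ℚ} {t : τ} : t ∈ USet C ↔ ∃ r, C t r ≠ 0 := by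
  simp [USet]

lemma csupp_subset_USet (C : τ → ι → ℚ) (r : ι) : csupp C r ⊆ USet C := by
  intro t ht
  rw [mem_USet]
  simp only [csupp, mem_filter] at ht
  exact ⟨r, ht.2⟩

-- covered set helper
noncomputable def covS (C : τ → ι → ℚ) {m : ℕ} (f : Fin m → ι) (i : Fin m) : Finset τ :=
  (univ.filter (fun j => j < i)).biUnion (fun j => csupp C (f j))

lemma covS_cons (C : τ → ι → ℚ) {m : ℕ} (r : ι) (f : Fin m → ι) (i : Fin m) :
    covS C (Fin.cons r f : Fin (m+1) → ι) i.succ = csupp C r ∪ covS C f i := by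
  ext x
  simp only [covS, mem_biUnion, mem_filter, mem_univ, true_and, mem_union]
  constructor
  · rintro ⟨j, hj, hx⟩
    rcases Fin.eq_zero_or_eq_succ j with rfl | ⟨j', rfl⟩
    · left; simpa using hx
    · right
      exact ⟨j', by simpa [Fin.succ_lt_succ_iff] using hj, by simpa using hx⟩
  · rintro (hx | ⟨j, hj, hx⟩)
    · exact ⟨0, Fin.succ_pos i, by simpa using hx⟩
    · exact ⟨j.succ, by simpa [Fin.succ_lt_succ_iff] using hj, by simpa using hx⟩

lemma biUnion_univ_cons (C : τ → ι → ℚ) {m : ℕ} (r : ι) (f : Fin m → ι) :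
    (univ : Finset (Fin (m+1))).biUnion (fun j => csupp C ((Fin.cons r f : Fin (m+1) → ι) j)) =
      csupp C r ∪ (univ : Finset (Fin m)).biUnion (fun j => csupp C (f j)) := by
  ext x
  simp only [mem_biUnion, mem_univ, true_and, mem_union]
  constructor
  · rintro ⟨j, hx⟩
    rcases Fin.eq_zero_or_eq_succ j with rfl | ⟨j', rfl⟩
    · left; simpa using hx
    · right; exact ⟨j', by simpa using hx⟩
  · rintro (hx | ⟨j, hx⟩)
    · exact ⟨0, by simpa using hx⟩
    · exact ⟨j.succ, by simpa using hx⟩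

lemma exists_greedy_aux (C : τ → ι → ℚ) :
    ∀ (c : ℕ) (W : Finset τ), (USet C \ W).card ≤ c →
    ∃ (m : ℕ) (f : Fin m → ι),
      (∀ i : Fin m, (csupp C (f i) \ (W ∪ covS C f i)).Nonempty) ∧
      USet C ⊆ W ∪ univ.biUnion (fun i => csupp C (f i)) := by
  intro c
  induction c with
  | zero =>
    intro W hW
    refine ⟨0, Fin.elim0, fun i => i.elim0, ?_⟩
    have h : USet C \ W = ∅ := Finset.card_eq_zero.mp (Nat.le_zero.mp hW)
    intro t ht
    exact Finset.mem_union_left _ (Finset.sdiff_eq_empty_iff_subset.mp h ht)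
  | succ c ih =>
    intro W hW
    by_cases hcov : USet C ⊆ W
    · exact ⟨0, Fin.elim0, fun i => i.elim0, fun t ht => Finset.mem_union_left _ (hcov ht)⟩
    · obtain ⟨t, ht⟩ : (USet C \ W).Nonempty := by
        rw [Finset.sdiff_nonempty]; exact hcov
      rw [Finset.mem_sdiff] at ht
      obtain ⟨r, hr⟩ := mem_USet.mp ht.1
      have htr : t ∈ csupp C r := by simp [csupp, hr]
      have hcard : (USet C \ (W ∪ csupp C r)).card ≤ c := by
        have hsub : USet C \ (W ∪ csupp C r) ⊆ (USet C \ W).erase t := by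
          intro x hx
          rw [Finset.mem_sdiff, Finset.mem_union] at hx
          push_neg at hx
          refine Finset.mem_erase.mpr ⟨?_, Finset.mem_sdiff.mpr ⟨hx.1, hx.2.1⟩⟩
          rintro rfl; exact hx.2.2 htr
        calc (USet C \ (W ∪ csupp C r)).card ≤ ((USet C \ W).erase t).card :=
              Finset.card_le_card hsub
          _ = (USet C \ W).card - 1 := Finset.card_erase_of_mem (Finset.mem_sdiff.mpr ht)
          _ ≤ c := by omega
      obtain ⟨m, f, hnew, hcover⟩ := ih (W ∪ csupp C r) hcard
      refine ⟨m + 1, (Fin.cons r f : Fin (m+1) → ι), ?_, ?_⟩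
      · intro i
        rcases Fin.eq_zero_or_eq_succ i with rfl | ⟨i', rfl⟩
        · refine ⟨t, ?_⟩
          rw [Finset.mem_sdiff]
          refine ⟨by simpa using htr, ?_⟩
          rw [Finset.mem_union]
          push_neg
          refine ⟨ht.2, ?_⟩
          simp [covS]
        · have := hnew i'
          rw [covS_cons]
          have heq : W ∪ (csupp C r ∪ covS C f i') = (W ∪ csupp C r) ∪ covS C f i' := by
            rw [Finset.union_assoc]
          rw [Fin.cons_succ, heq]
          exact this
      · rw [biUnion_univ_cons]
        intro x hx
        have := hcover hx
        rw [Finset.mem_union] at this ⊢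
        rcases this with h' | h'
        · rw [Finset.mem_union] at h'
          rcases h' with h' | h'
          · exact Or.inl h'
          · exact Or.inr (Finset.mem_union_left _ h')
        · exact Or.inr (Finset.mem_union_right _ h')

lemma exists_greedy (C : τ → ι → ℚ) :
    ∃ (m : ℕ) (f : Fin m → ι),
      (∀ i : Fin m, (csupp C (f i) \ covS C f i).Nonempty) ∧
      USet C ⊆ univ.biUnion (fun i => csupp C (f i)) := by
  obtain ⟨m, f, hnew, hcover⟩ := exists_greedy_aux C (USet C \ ∅).card ∅ le_rfl
  exact ⟨m, f, fun i => by simpa using hnew i, fun t ht => by simpa using hcover ht⟩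

set_option linter.unusedSectionVars false

noncomputable def newS (C : τ → ι → ℚ) {m : ℕ} (f : Fin m → ι) (i : Fin m) : Finset τ :=
  csupp C (f i) \ covS C f i

lemma csupp_subset_covS {C : τ → ι → ℚ} {m : ℕ} {f : Fin m → ι} {i j : Fin m} (h : j < i) :
    csupp C (f j) ⊆ covS C f i := by
  intro x hx
  exact Finset.mem_biUnion.mpr ⟨j, by simp [h], hx⟩

lemma newS_disj {C : τ → ι → ℚ} {m : ℕ} {f : Fin m → ι} {i j : Fin m} (h : i ≠ j) :
    Disjoint (newS C f i) (newS C f j) := by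
  rcases lt_or_gt_of_ne h with h' | h'
  · refine Finset.disjoint_left.mpr fun x hx hx' => ?_
    have : x ∈ covS C f j := csupp_subset_covS h' (Finset.mem_sdiff.mp hx).1
    exact (Finset.mem_sdiff.mp hx').2 this
  · refine Finset.disjoint_left.mpr fun x hx hx' => ?_
    have : x ∈ covS C f i := csupp_subset_covS h' (Finset.mem_sdiff.mp hx').1
    exact (Finset.mem_sdiff.mp hx).2 this

lemma greedy_inj {C : τ → ι → ℚ} {m : ℕ} {f : Fin m → ι}
    (hnew : ∀ i : Fin m, (newS C f i).Nonempty) : Function.Injective f := by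
  intro i j hij
  by_contra hne
  rcases lt_or_gt_of_ne hne with h' | h'
  · obtain ⟨t, ht⟩ := hnew j
    simp only [newS, Finset.mem_sdiff] at ht
    exact ht.2 (csupp_subset_covS h' (hij ▸ ht.1))
  · obtain ⟨t, ht⟩ := hnew i
    simp only [newS, Finset.mem_sdiff] at ht
    exact ht.2 (csupp_subset_covS h' (hij ▸ ht.1))

lemma greedy_indep {C : τ → ι → ℚ} {m : ℕ} {f : Fin m → ι}
    (hnew : ∀ i : Fin m, (newS C f i).Nonempty) :
    LinearIndependent ℚ (fun i : Fin m => (fun t => C t (f i) : τ → ℚ)) := by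
  rw [Fintype.linearIndependent_iff]
  intro g hg
  by_contra hcon
  push_neg at hcon
  obtain ⟨i₀, hi₀⟩ := hcon
  have hs : (univ.filter (fun i => g i ≠ 0)).Nonempty := ⟨i₀, by simp [hi₀]⟩
  set i := (univ.filter (fun i => g i ≠ 0)).max' hs with hidef
  have hgi : g i ≠ 0 := by
    have := Finset.max'_mem _ hs
    rw [← hidef] at this
    exact (Finset.mem_filter.mp this).2
  obtain ⟨t, ht⟩ := hnew i
  simp only [newS, Finset.mem_sdiff] at ht
  have happ : ∑ j, g j * C t (f j) = 0 := by
    have := congrFun hg t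
    simpa [Finset.sum_apply] using this
  have hsingle : ∑ j, g j * C t (f j) = g i * C t (f i) := by
    refine Finset.sum_eq_single i (fun j _ hji => ?_) (fun h => absurd (Finset.mem_univ i) h)
    by_cases hgj : g j = 0
    · simp [hgj]
    · have hjle : j ≤ i := Finset.le_max' _ j (by simp [hgj])
      have hjlt : j < i := lt_of_le_of_ne hjle hji
      have : C t (f j) = 0 := by
        by_contra hC
        exact ht.2 (csupp_subset_covS hjlt (by simp [csupp, hC]))
      simp [this]
  rw [hsingle] at happ
  have hCt : C t (f i) ≠ 0 := by
    have := ht.1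
    simp [csupp] at this
    exact this
  exact hgi (by
    rcases mul_eq_zero.mp happ with h | h
    · exact h
    · exact absurd h hCt)

lemma biUnion_newS {C : τ → ι → ℚ} {m : ℕ} {f : Fin m → ι}
    (hcover : USet C ⊆ univ.biUnion (fun i => csupp C (f i))) :
    univ.biUnion (fun i => newS C f i) = USet C := by
  apply Finset.Subset.antisymm
  · intro t ht
    obtain ⟨i, _, hi⟩ := Finset.mem_biUnion.mp ht
    exact csupp_subset_USet C (f i) (Finset.mem_sdiff.mp hi).1
  · intro t ht
    have := hcover ht
    obtain ⟨i, _, hi⟩ := Finset.mem_biUnion.mp this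
    have hne : (univ.filter (fun j : Fin m => t ∈ csupp C (f j))).Nonempty := ⟨i, by simp [hi]⟩
    set i₀ := (univ.filter (fun j : Fin m => t ∈ csupp C (f j))).min' hne with hi₀def
    have hmem : t ∈ csupp C (f i₀) := by
      have := Finset.min'_mem _ hne
      rw [← hi₀def] at this
      exact (Finset.mem_filter.mp this).2
    refine Finset.mem_biUnion.mpr ⟨i₀, Finset.mem_univ _, Finset.mem_sdiff.mpr ⟨hmem, ?_⟩⟩
    intro hcontra
    obtain ⟨j, hj, hjmem⟩ := Finset.mem_biUnion.mp hcontra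
    rw [Finset.mem_filter] at hj
    have : i₀ ≤ j := Finset.min'_le _ j (by simp [hjmem])
    exact absurd hj.2 (not_lt_of_ge this)

lemma sum_newS_card {C : τ → ι → ℚ} {m : ℕ} {f : Fin m → ι}
    (hcover : USet C ⊆ univ.biUnion (fun i => csupp C (f i))) :
    ∑ i, (newS C f i).card = (USet C).card := by
  rw [← biUnion_newS hcover]
  exact (Finset.card_biUnion (fun i _ j _ hij => newS_disj hij)).symm

noncomputable def ktouch (k : τ → ι → ℕ) (r : ι) : Finset τ := univ.filter (fun t => k t r ≠ 0)

noncomputable def ZSet (C : τ → ι → ℚ) : Finset τ := univ.filter (fun t => ∀ r, C t r = 0)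

lemma mem_ZSet {C : τ → ι → ℚ} {t : τ} : t ∈ ZSet C ↔ ∀ r, C t r = 0 := by simp [ZSet]

lemma card_U_add_Z (C : τ → ι → ℚ) : (USet C).card + (ZSet C).card = Fintype.card τ := by
  rw [USet, ZSet, Nat.add_comm]
  have := Finset.card_filter_add_card_filter_not (s := (univ : Finset τ))
    (p := fun t => ∀ r, C t r = 0)
  simpa using this

lemma U_or_Z (C : τ → ι → ℚ) (t : τ) : t ∈ USet C ∨ t ∈ ZSet C := by
  by_cases h : ∀ r, C t r = 0
  · exact Or.inr (mem_ZSet.mpr h)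
  · push_neg at h; exact Or.inl (mem_USet.mpr h)

lemma csupp_subset_ktouch {C : τ → ι → ℚ} {k : τ → ι → ℕ}
    (H3 : ∀ t r, k t r = 0 → C t r = 0) (r : ι) : csupp C r ⊆ ktouch k r := by
  intro t ht
  simp only [csupp, mem_filter] at ht
  simp only [ktouch, mem_filter, mem_univ, true_and]
  intro h0
  exact ht.2 (H3 t r h0)

lemma mm_ge {C : τ → ι → ℚ} {k : τ → ι → ℕ}
    (H3 : ∀ t r, k t r = 0 → C t r = 0) (H3' : ∀ t r, C t r = 0 → k t r ≠ 1) (r : ι) :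
    2 * ((ktouch k r) \ (csupp C r)).card + (csupp C r).card ≤ ∑ t, k t r := by
  have hsub := csupp_subset_ktouch H3 r
  have hunion : (ktouch k r \ csupp C r) ∪ csupp C r = ktouch k r := Finset.sdiff_union_of_subset hsub
  have hdisj : Disjoint (ktouch k r \ csupp C r) (csupp C r) := Finset.sdiff_disjoint
  have h1 : ∑ t ∈ ktouch k r, k t r ≤ ∑ t, k t r := by
    apply Finset.sum_le_sum_of_subset (Finset.subset_univ _)
  rw [← hunion, Finset.sum_union hdisj] at h1
  have h2 : 2 * (ktouch k r \ csupp C r).card ≤ ∑ t ∈ ktouch k r \ csupp C r, k t r := by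
    rw [two_mul]
    calc (ktouch k r \ csupp C r).card + (ktouch k r \ csupp C r).card
        = ∑ _t ∈ ktouch k r \ csupp C r, 2 := by rw [Finset.sum_const]; ring
      _ ≤ ∑ t ∈ ktouch k r \ csupp C r, k t r := by
          apply Finset.sum_le_sum
          intro t ht
          rw [Finset.mem_sdiff] at ht
          have hkt : k t r ≠ 0 := by
            have := ht.1; simp only [ktouch, mem_filter] at this; exact this.2
          have hCt : C t r = 0 := by
            by_contra h
            exact ht.2 (by simp [csupp, h])
          have := H3' t r hCt
          omega
  have h3 : (csupp C r).card ≤ ∑ t ∈ csupp C r, k t r := by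
    calc (csupp C r).card = ∑ _t ∈ csupp C r, 1 := by simp
      _ ≤ _ := by
          apply Finset.sum_le_sum
          intro t ht
          have hCt : C t r ≠ 0 := by simp only [csupp, mem_filter] at ht; exact ht.2
          have : k t r ≠ 0 := fun h0 => hCt (H3 t r h0)
          omega
  omega

lemma serve_exists {k : τ → ι → ℕ}
    (H4 : ∀ t t' : τ, Relation.ReflTransGen (fun a b => ∃ r, k a r ≠ 0 ∧ k b r ≠ 0) t t')
    (hl : 2 ≤ Fintype.card τ) (t : τ) :
    ∃ r, k t r ≠ 0 ∧ ∃ w, w ≠ t ∧ k w r ≠ 0 := by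
  obtain ⟨t', ht'⟩ := Fintype.exists_ne_of_one_lt_card (by omega) t
  by_contra hcon
  push_neg at hcon
  have hstay : ∀ x : τ, Relation.ReflTransGen (fun a b => ∃ r, k a r ≠ 0 ∧ k b r ≠ 0) t x → x = t := by
    intro x hx
    induction hx with
    | refl => rfl
    | tail hab hbc ih =>
      rename_i b c
      obtain ⟨r, hr1, hr2⟩ := hbc
      rw [ih] at hr1
      by_contra hne
      exact hr2 (hcon r hr1 c hne)
  exact ht' (hstay t' (H4 t t'))

theorem core (C : τ → ι → ℚ) (k : τ → ι → ℕ)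
    (hl : 3 ≤ Fintype.card τ)
    (H1 : ∀ r, 2 ≤ ∑ t, k t r)
    (H3 : ∀ t r, k t r = 0 → C t r = 0)
    (H3' : ∀ t r, C t r = 0 → k t r ≠ 1)
    (H4 : ∀ t t' : τ, Relation.ReflTransGen (fun a b => ∃ r, k a r ≠ 0 ∧ k b r ≠ 0) t t')
    (v : ι → ℚ) (hv : ∀ r, 0 < v r) (hbal : ∀ t, ∑ r, C t r * v r = 0) :
    Fintype.card τ + 1 + 2 * Fintype.card ι ≤
      2 * Module.finrank ℚ (Submodule.span ℚ (Set.range (fun r => (fun t => C t r) : ι → τ → ℚ)))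
        + ∑ t, ∑ r, k t r := by
  classical
  -- nonempty ι
  haveI hιne : Nonempty ι := by
    by_contra hcon
    rw [not_nonempty_iff] at hcon
    obtain ⟨t⟩ := Fintype.card_pos_iff.mp (by omega : 0 < Fintype.card τ)
    obtain ⟨t', ht'⟩ := Fintype.exists_ne_of_one_lt_card (by omega) t
    have hstay : ∀ x : τ, Relation.ReflTransGen (fun a b => ∃ r, k a r ≠ 0 ∧ k b r ≠ 0) t x → x = t := by
      intro x hx
      induction hx with
      | refl => rfl
      | tail hab hbc ih => obtain ⟨r, _, _⟩ := hbc; exact (hcon.false r).elim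
    exact ht' (hstay t' (H4 t t'))
  haveI : Nonempty τ := Fintype.card_pos_iff.mp (by omega)
  obtain ⟨m, f, hnewne, hcover⟩ := exists_greedy C
  set ρ := Module.finrank ℚ (Submodule.span ℚ (Set.range (fun r => (fun t => C t r) : ι → τ → ℚ))) with hρdef
  set N := ∑ t, ∑ r, k t r with hNdef
  set d := Fintype.card ι with hddef
  set mm : ι → ℕ := fun r => ∑ t, k t r with hmmdef
  set nn : ι → ℕ := fun r => (csupp C r).card with hnndef
  set zz : ι → ℕ := fun r => ((ktouch k r) \ (csupp C r)).card with hzzdef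
  set σ : τ → ι := fun t => (serve_exists H4 (by omega) t).choose with hσdef
  have hσspec : ∀ t, k t (σ t) ≠ 0 ∧ ∃ w, w ≠ t ∧ k w (σ t) ≠ 0 :=
    fun t => (serve_exists H4 (by omega) t).choose_spec
  set ζ : ι → ℕ := fun r => ((ZSet C).filter (fun t => σ t = r)).card with hζdef
  set chosen : Finset ι := univ.image f with hchosendef
  set newc : ι → ℕ := fun r => ∑ i ∈ univ.filter (fun i => f i = r), (newS C f i).card with hnewcdef
  have hfinj : Function.Injective f := greedy_inj hnewne
  -- basic facts
  have hmm2 : ∀ r, 2 ≤ mm r := H1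
  have hmmzn : ∀ r, 2 * zz r + nn r ≤ mm r := fun r => mm_ge H3 H3' r
  have hζz : ∀ r, ζ r ≤ zz r := by
    intro r
    apply Finset.card_le_card
    intro t ht
    rw [Finset.mem_filter] at ht
    obtain ⟨htZ, htσ⟩ := ht
    rw [Finset.mem_sdiff]
    constructor
    · simp only [ktouch, mem_filter, mem_univ, true_and]
      rw [← htσ]; exact (hσspec t).1
    · simp only [csupp, mem_filter, mem_univ, true_and, not_not]
      exact mem_ZSet.mp htZ r
  have hcardtouch : ∀ r, zz r + nn r = (ktouch k r).card := by
    intro r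
    exact Finset.card_sdiff_add_card_eq_card (csupp_subset_ktouch H3 r)
  have hserve2 : ∀ r, 1 ≤ ζ r → 2 ≤ zz r + nn r := by
    intro r hr
    rw [hcardtouch r]
    have hpos : 0 < ((ZSet C).filter (fun t => σ t = r)).card := hr
    obtain ⟨t, ht⟩ := Finset.card_pos.mp hpos
    rw [Finset.mem_filter] at ht
    obtain ⟨w, hwt, hw⟩ := (hσspec t).2
    rw [ht.2] at hw
    refine Finset.one_lt_card.mpr ⟨t, ?_, w, ?_, fun h => hwt h.symm⟩
    · simp only [ktouch, mem_filter, mem_univ, true_and]; rw [← ht.2]; exact (hσspec t).1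
    · simp only [ktouch, mem_filter, mem_univ, true_and]; exact hw
  have hfiltereq : ∀ i : Fin m, univ.filter (fun i' => f i' = f i) = {i} := by
    intro i
    ext j
    simp only [Finset.mem_filter, mem_univ, true_and, Finset.mem_singleton]
    exact ⟨fun h => hfinj h, fun h => h ▸ rfl⟩
  have hnewchosen : ∀ i : Fin m, newc (f i) = (newS C f i).card := by
    intro i
    rw [hnewcdef]
    simp only
    rw [hfiltereq i, Finset.sum_singleton]
  have hnewle : ∀ i : Fin m, newc (f i) ≤ nn (f i) := by
    intro i
    rw [hnewchosen i]
    exact Finset.card_le_card (Finset.sdiff_subset)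
  have hnewc0 : ∀ r, r ∉ chosen → newc r = 0 := by
    intro r hr
    rw [hnewcdef]
    simp only
    rw [Finset.sum_eq_zero]
    intro i hi
    rw [Finset.mem_filter] at hi
    exact absurd (Finset.mem_image.mpr ⟨i, Finset.mem_univ _, hi.2⟩) hr
  have hsumnew : ∑ r, newc r = (USet C).card := by
    rw [hnewcdef]
    simp only
    rw [Finset.sum_fiberwise (s := univ) (g := f) (f := fun i => (newS C f i).card)]
    exact sum_newS_card hcover
  have hsumζ : ∑ r, ζ r = (ZSet C).card := by
    rw [hζdef]
    simp only
    exact (Finset.card_eq_sum_card_fiberwise (fun t _ => Finset.mem_univ (σ t))).symm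
  have hUZ : (USet C).card + (ZSet C).card = Fintype.card τ := card_U_add_Z C
  have hchosencard : chosen.card = m := by
    rw [hchosendef, Finset.card_image_of_injective _ hfinj, Finset.card_univ, Fintype.card_fin]
  have hsumite : ∑ r, (if r ∈ chosen then 2 else 0) = 2 * m := by
    rw [Finset.sum_ite_mem, Finset.univ_inter, Finset.sum_const, hchosencard, smul_eq_mul]
    omega
  have hρm : m ≤ ρ := by
    have h1 : LinearIndependent ℚ (fun i : Fin m => (fun t => C t (f i) : τ → ℚ)) :=
      greedy_indep hnewne
    have h2 : Module.finrank ℚ (Submodule.span ℚ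
        (Set.range (fun i : Fin m => (fun t => C t (f i) : τ → ℚ)))) = m := by
      rw [finrank_span_eq_card h1, Fintype.card_fin]
    have h3 : Submodule.span ℚ (Set.range (fun i : Fin m => (fun t => C t (f i) : τ → ℚ))) ≤
        Submodule.span ℚ (Set.range (fun r => (fun t => C t r) : ι → τ → ℚ)) := by
      apply Submodule.span_mono
      rintro x ⟨i, rfl⟩
      exact ⟨f i, rfl⟩
    calc m = _ := h2.symm
      _ ≤ ρ := Submodule.finrank_mono h3
  -- pay and req
  set pay : ι → ℕ := fun r => mm r + (if r ∈ chosen then 2 else 0) with hpaydef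
  set req : ι → ℕ := fun r => 2 + ζ r + newc r with hreqdef
  have claim1 : ∀ r, req r ≤ pay r := by
    intro r
    by_cases hr : r ∈ chosen
    · obtain ⟨i, _, rfl⟩ := Finset.mem_image.mp hr
      have h1 := hζz (f i)
      have h2 := hnewle i
      have h3 := hmmzn (f i)
      simp only [hpaydef, hreqdef, if_pos hr]
      omega
    · have h0 := hnewc0 r hr
      simp only [hpaydef, hreqdef, if_neg hr, h0]
      by_cases hζr : ζ r = 0
      · have := hmm2 r; omega
      · have h1 := hserve2 r (by omega)
        have h2 := hζz r
        have h3 := hmmzn r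
        omega
  have hsumreq : ∑ r, req r = 2 * d + Fintype.card τ := by
    rw [hreqdef]
    simp only
    rw [Finset.sum_add_distrib, Finset.sum_add_distrib, hsumζ, hsumnew, Finset.sum_const,
      Finset.card_univ, smul_eq_mul]
    omega
  have hsumpay : ∑ r, pay r = N + 2 * m := by
    rw [hpaydef]
    simp only
    rw [Finset.sum_add_distrib, hsumite, hNdef, Finset.sum_comm]
  by_cases hstrict : ∃ r, req r + 1 ≤ pay r
  · obtain ⟨r₀, hr₀⟩ := hstrict
    have : ∑ r, req r < ∑ r, pay r :=
      Finset.sum_lt_sum (fun r _ => claim1 r) ⟨r₀, Finset.mem_univ _, by omega⟩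
    rw [hsumreq, hsumpay] at this
    omega
  · push_neg at hstrict
    have heq : ∀ r, pay r = req r := fun r => le_antisymm (by have := hstrict r; omega) (claim1 r)
    rcases eq_or_lt_of_le hρm with hρeq | hρlt
    · -- tight case: ρ = m
      exfalso
      have hnnbr : ∀ r, nn r = (csupp C r).card := fun _ => rfl
      have hζbr : ∀ r, ζ r = ((ZSet C).filter (fun t => σ t = r)).card := fun _ => rfl
      have htC : ∀ i : Fin m, zz (f i) = 0 ∧ ζ (f i) = 0 ∧ nn (f i) = mm (f i) ∧
          newc (f i) = nn (f i) ∧ 2 ≤ nn (f i) := by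
        intro i
        have h1 := heq (f i)
        have hmem : f i ∈ chosen := Finset.mem_image.mpr ⟨i, Finset.mem_univ _, rfl⟩
        simp only [hpaydef, hreqdef, if_pos hmem] at h1
        have h2 := hζz (f i)
        have h3 := hnewle i
        have h4 := hmmzn (f i)
        have h5 := hmm2 (f i)
        omega
      have hsuppeq : ∀ i : Fin m, csupp C (f i) = newS C f i := by
        intro i
        refine (Finset.eq_of_subset_of_card_le Finset.sdiff_subset ?_).symm
        have h1 := (htC i).2.2.2.1
        have h2 := hnewchosen i
        have h3 := hnnbr (f i)
        have h4 : (newS C f i).card = (csupp C (f i) \ covS C f i).card := rfl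
        omega
      have htoucheq : ∀ i : Fin m, ktouch k (f i) = csupp C (f i) := by
        intro i
        have h0 : zz (f i) = 0 := (htC i).1
        have hemp : (ktouch k (f i) \ csupp C (f i)) = ∅ := Finset.card_eq_zero.mp h0
        have hsub := csupp_subset_ktouch H3 (f i)
        apply Finset.Subset.antisymm _ hsub
        intro t ht
        by_contra htc
        have hmem2 : t ∈ ktouch k (f i) \ csupp C (f i) := Finset.mem_sdiff.mpr ⟨ht, htc⟩
        simp [hemp] at hmem2
      have hBdisj : ∀ i j : Fin m, i ≠ j → Disjoint (csupp C (f i)) (csupp C (f j)) := by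
        intro i j hij
        rw [hsuppeq i, hsuppeq j]
        exact newS_disj hij
      have hBcard : ∀ i : Fin m, 2 ≤ (csupp C (f i)).card := by
        intro i
        have h1 := (htC i).2.2.2.2
        have h2 := hnnbr (f i)
        omega
      have hspaneq : Submodule.span ℚ (Set.range (fun i : Fin m => (fun t => C t (f i) : τ → ℚ))) =
          Submodule.span ℚ (Set.range (fun r => (fun t => C t r) : ι → τ → ℚ)) := by
        have hle : Submodule.span ℚ (Set.range (fun i : Fin m => (fun t => C t (f i) : τ → ℚ))) ≤
            Submodule.span ℚ (Set.range (fun r => (fun t => C t r) : ι → τ → ℚ)) := by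
          apply Submodule.span_mono
          rintro x ⟨i, rfl⟩
          exact ⟨f i, rfl⟩
        refine Submodule.eq_of_le_of_finrank_le hle ?_
        rw [finrank_span_eq_card (greedy_indep hnewne), Fintype.card_fin, ← hρdef]
        exact hρeq.ge
      have hcolmem : ∀ r : ι, ∃ a : Fin m → ℚ, ∀ t, C t r = ∑ i, a i * C t (f i) := by
        intro r
        have hmem : (fun t => C t r) ∈ Submodule.span ℚ
            (Set.range (fun i : Fin m => (fun t => C t (f i) : τ → ℚ))) := by
          rw [hspaneq]
          exact Submodule.subset_span ⟨r, rfl⟩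
        obtain ⟨a, ha⟩ := (Submodule.mem_span_range_iff_exists_fun ℚ).mp hmem
        refine ⟨a, fun t => ?_⟩
        have h2 := congrFun ha t
        simp only [Finset.sum_apply, Pi.smul_apply, smul_eq_mul] at h2
        exact h2.symm
      have hkey : ∀ (r : ι) (t : τ), C t r ≠ 0 →
          ∃ i, t ∈ csupp C (f i) ∧ csupp C (f i) ⊆ csupp C r := by
        intro r t hCtr
        obtain ⟨a, ha⟩ := hcolmem r
        have hsum : ∑ i, a i * C t (f i) ≠ 0 := by rw [← ha t]; exact hCtr
        obtain ⟨i, _, hi⟩ := Finset.exists_ne_zero_of_sum_ne_zero hsum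
        have hai : a i ≠ 0 := fun h => hi (by simp [h])
        have hCtfi : C t (f i) ≠ 0 := fun h => hi (by simp [h])
        refine ⟨i, by simp [csupp, hCtfi], ?_⟩
        intro w hw
        have hCw : C w (f i) ≠ 0 := by simp only [csupp, mem_filter] at hw; exact hw.2
        have hwother : ∀ j, j ≠ i → C w (f j) = 0 := by
          intro j hj
          by_contra hCwj
          have hwmem : w ∈ csupp C (f j) := by simp [csupp, hCwj]
          exact (Finset.disjoint_left.mp (hBdisj j i hj) hwmem) hw
        have hCwr : C w r = a i * C w (f i) := by
          rw [ha w]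
          refine Finset.sum_eq_single i (fun j _ hj => by rw [hwother j hj]; ring)
            (fun h => absurd (Finset.mem_univ i) h)
        simp only [csupp, mem_filter, mem_univ, true_and]
        rw [hCwr]
        exact mul_ne_zero hai hCw
      have hclass : ∀ r, r ∉ chosen →
          (nn r = 0 ∧ (ktouch k r).card ≤ 1) ∨
          (∃ i, ktouch k r = csupp C (f i) ∧ csupp C r = csupp C (f i)) ∨
          ((∀ t ∈ ktouch k r, σ t = r ∧ t ∈ ZSet C) ∧ (ktouch k r).card = 2) := by
        intro r hr
        have h1 := heq r
        simp only [hpaydef, hreqdef, if_neg hr, hnewc0 r hr] at h1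
        have h2 := hζz r
        have h3 := hmmzn r
        by_cases hζ0 : ζ r = 0
        · by_cases hnn0 : nn r = 0
          · left
            refine ⟨hnn0, ?_⟩
            have h4 := hcardtouch r
            omega
          · right; left
            obtain ⟨t, ht⟩ := Finset.card_pos.mp
              (show 0 < (csupp C r).card by have := hnnbr r; omega)
            have hCtr : C t r ≠ 0 := by simp only [csupp, mem_filter] at ht; exact ht.2
            obtain ⟨i, hti, hBi⟩ := hkey r t hCtr
            have hcardB := hBcard i
            have hnnle : (csupp C (f i)).card ≤ (csupp C r).card := Finset.card_le_card hBi
            have hbr := hnnbr r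
            have hrB : csupp C r = csupp C (f i) :=
              (Finset.eq_of_subset_of_card_le hBi (by omega)).symm
            refine ⟨i, ?_, hrB⟩
            have hzz0 : zz r = 0 := by omega
            have hsub := csupp_subset_ktouch H3 r
            have hemp : ktouch k r \ csupp C r = ∅ := Finset.card_eq_zero.mp hzz0
            have hte : ktouch k r = csupp C r := by
              apply Finset.Subset.antisymm _ hsub
              intro x hx
              by_contra hxc
              have hmem2 : x ∈ ktouch k r \ csupp C r := Finset.mem_sdiff.mpr ⟨hx, hxc⟩
              simp [hemp] at hmem2
            rw [hte, hrB]
        · have hserve := hserve2 r (by omega)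
          by_cases hζ1 : ζ r = 1
          · exfalso
            obtain ⟨t, ht⟩ := Finset.card_pos.mp
              (show 0 < (csupp C r).card by have := hnnbr r; omega)
            have hCtr : C t r ≠ 0 := by simp only [csupp, mem_filter] at ht; exact ht.2
            obtain ⟨i, _, hBi⟩ := hkey r t hCtr
            have hcardB := hBcard i
            have hle := Finset.card_le_card hBi
            have hbr := hnnbr r
            omega
          · have hζe : ζ r = 2 := by omega
            have hzz2 : zz r = 2 := by omega
            have hnn0 : nn r = 0 := by omega
            right; right
            have hcard2 : (ktouch k r).card = 2 := by
              have h4 := hcardtouch r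
              omega
            refine ⟨?_, hcard2⟩
            have hfibsub : (ZSet C).filter (fun t => σ t = r) ⊆ ktouch k r := by
              intro t ht'
              rw [Finset.mem_filter] at ht'
              simp only [ktouch, mem_filter, mem_univ, true_and]
              rw [← ht'.2]; exact (hσspec t).1
            have hfib_eq : (ZSet C).filter (fun t => σ t = r) = ktouch k r :=
              Finset.eq_of_subset_of_card_le hfibsub (by have := hζbr r; omega)
            intro t ht'
            rw [← hfib_eq, Finset.mem_filter] at ht'
            exact ⟨ht'.2, ht'.1⟩
      set pt : τ → Finset τ := fun t =>
        if h : ∃ i, t ∈ csupp C (f i) then csupp C (f h.choose) else ktouch k (σ t) with hptdef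
      have hptU : ∀ (t : τ) (i : Fin m), t ∈ csupp C (f i) → pt t = csupp C (f i) := by
        intro t i hti
        have hex : ∃ i, t ∈ csupp C (f i) := ⟨i, hti⟩
        rw [hptdef]
        simp only
        rw [dif_pos hex]
        have hti' : t ∈ csupp C (f hex.choose) := hex.choose_spec
        rcases eq_or_ne hex.choose i with h | h
        · rw [h]
        · exact absurd hti (Finset.disjoint_left.mp (hBdisj hex.choose i h) hti')
      have hptZ : ∀ t, t ∈ ZSet C → pt t = ktouch k (σ t) := by
        intro t ht
        rw [hptdef]; simp only
        rw [dif_neg]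
        rintro ⟨i, hti⟩
        have hC : C t (f i) ≠ 0 := by simp only [csupp, mem_filter] at hti; exact hti.2
        exact hC (mem_ZSet.mp ht (f i))
      have hptmem : ∀ t, t ∈ pt t := by
        intro t
        rw [hptdef]; simp only
        by_cases h : ∃ i, t ∈ csupp C (f i)
        · rw [dif_pos h]; exact h.choose_spec
        · rw [dif_neg h]
          simp only [ktouch, mem_filter, mem_univ, true_and]
          exact (hσspec t).1
      have hσtype : ∀ t, t ∈ ZSet C →
          (∀ w ∈ ktouch k (σ t), σ w = σ t ∧ w ∈ ZSet C) ∧ (ktouch k (σ t)).card = 2 := by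
        intro t ht
        have hζσ : 1 ≤ ζ (σ t) := by
          have hm : t ∈ (ZSet C).filter (fun w => σ w = σ t) := Finset.mem_filter.mpr ⟨ht, rfl⟩
          have := Finset.card_pos.mpr ⟨t, hm⟩
          have hb := hζbr (σ t)
          omega
        have hσnc : σ t ∉ chosen := by
          intro hmem
          obtain ⟨i, _, hi⟩ := Finset.mem_image.mp hmem
          have hz := (htC i).2.1
          rw [hi] at hz
          omega
        rcases hclass (σ t) hσnc with ⟨hnn0, hcard1⟩ | ⟨i, hti, _⟩ | h
        · exfalso
          obtain ⟨w, hwt, hw⟩ := (hσspec t).2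
          have h1 : t ∈ ktouch k (σ t) := by simp [ktouch, (hσspec t).1]
          have h2 : w ∈ ktouch k (σ t) := by simp [ktouch, hw]
          have := Finset.one_lt_card.mpr ⟨t, h1, w, h2, fun h => hwt h.symm⟩
          omega
        · exfalso
          have h1 : t ∈ ktouch k (σ t) := by simp [ktouch, (hσspec t).1]
          rw [hti] at h1
          have hC : C t (f i) ≠ 0 := by simp only [csupp, mem_filter] at h1; exact h1.2
          exact hC (mem_ZSet.mp ht (f i))
        · exact h
      have hptouch : ∀ (r : ι) (t : τ), t ∈ ktouch k r → ktouch k r ⊆ pt t := by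
        intro r t ht
        by_cases hr : r ∈ chosen
        · obtain ⟨i, _, rfl⟩ := Finset.mem_image.mp hr
          rw [htoucheq i] at ht ⊢
          rw [hptU t i ht]
        · rcases hclass r hr with ⟨_, hcard1⟩ | ⟨i, hti, _⟩ | ⟨hall, _⟩
          · intro w hw
            have hwt : w = t := Finset.card_le_one.mp hcard1 w hw t ht
            rw [hwt]; exact hptmem t
          · rw [hti] at ht ⊢
            rw [hptU t i ht]
          · obtain ⟨hσt, htZ⟩ := hall t ht
            rw [hptZ t htZ, hσt]
      have hpcoh : ∀ t w, w ∈ pt t → pt w = pt t := by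
        intro t w hw
        rcases U_or_Z C t with htU | htZ
        · obtain ⟨i, _, hti⟩ := Finset.mem_biUnion.mp (hcover htU)
          rw [hptU t i hti] at hw ⊢
          exact hptU w i hw
        · rw [hptZ t htZ] at hw ⊢
          obtain ⟨hσw, hwZ⟩ := (hσtype t htZ).1 w hw
          rw [hptZ w hwZ, hσw]
      have hreach : ∀ t t', Relation.ReflTransGen (fun a b => ∃ r, k a r ≠ 0 ∧ k b r ≠ 0) t t' →
          t' ∈ pt t := by
        intro t t' h
        induction h with
        | refl => exact hptmem t
        | tail hab hbc ih =>
          rename_i b c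
          obtain ⟨r, hbr, hcr⟩ := hbc
          have hbmem : b ∈ ktouch k r := by simp [ktouch, hbr]
          have hcmem : c ∈ ktouch k r := by simp [ktouch, hcr]
          rw [← hpcoh t b ih]
          exact hptouch r b hbmem hcmem
      obtain ⟨t₀⟩ := (inferInstance : Nonempty τ)
      have huniv : ∀ t', t' ∈ pt t₀ := fun t' => hreach t₀ t' (H4 t₀ t')
      have hcardge : Fintype.card τ ≤ (pt t₀).card := by
        rw [← Finset.card_univ]
        exact Finset.card_le_card (fun x _ => huniv x)
      rcases U_or_Z C t₀ with ht₀U | ht₀Z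
      · obtain ⟨i, _, ht₀i⟩ := Finset.mem_biUnion.mp (hcover ht₀U)
        have hpteq := hptU t₀ i ht₀i
        rw [hpteq] at huniv
        have hBuniv : csupp C (f i) = univ := Finset.eq_univ_iff_forall.mpr huniv
        have hCzero : ∀ r, r ≠ f i → ∀ t, C t r = 0 := by
          intro r hrfi t
          by_cases hr : r ∈ chosen
          · obtain ⟨j, _, rfl⟩ := Finset.mem_image.mp hr
            have hij : j ≠ i := fun h => hrfi (by rw [h])
            exfalso
            obtain ⟨x, hx⟩ := Finset.card_pos.mp
              (show 0 < (csupp C (f j)).card by have := hBcard j; omega)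
            have hxin : x ∈ csupp C (f i) := by rw [hBuniv]; exact Finset.mem_univ x
            exact (Finset.disjoint_left.mp (hBdisj j i hij) hx) hxin
          · rcases hclass r hr with ⟨hnn0, _⟩ | ⟨j, _, hsupp⟩ | ⟨hall, hcard2⟩
            · have hemp : csupp C r = ∅ := by
                apply Finset.card_eq_zero.mp
                have := hnnbr r
                omega
              by_contra hC
              have hmem2 : t ∈ csupp C r := by simp [csupp, hC]
              simp [hemp] at hmem2
            · exfalso
              have hj : j = i := by
                by_contra hij
                obtain ⟨x, hx⟩ := Finset.card_pos.mp
                  (show 0 < (csupp C (f j)).card by have := hBcard j; omega)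
                have hxin : x ∈ csupp C (f i) := by rw [hBuniv]; exact Finset.mem_univ x
                exact (Finset.disjoint_left.mp (hBdisj j i hij) hx) hxin
              have h1 := heq r
              simp only [hpaydef, hreqdef, if_neg hr, hnewc0 r hr] at h1
              have h2 := hζz r
              have h3 := hmmzn r
              have hnnval : nn r = Fintype.card τ := by
                rw [hnnbr r, hsupp, hj, hBuniv, Finset.card_univ]
              omega
            · exfalso
              obtain ⟨x, hx⟩ := Finset.card_pos.mp (show 0 < (ktouch k r).card by omega)
              have hxZ := (hall x hx).2
              have hxin : x ∈ csupp C (f i) := by rw [hBuniv]; exact Finset.mem_univ x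
              have hC : C x (f i) ≠ 0 := by simp only [csupp, mem_filter] at hxin; exact hxin.2
              exact hC (mem_ZSet.mp hxZ (f i))
        have hb := hbal t₀
        have hsingle : ∑ r, C t₀ r * v r = C t₀ (f i) * v (f i) :=
          Finset.sum_eq_single (f i) (fun r _ hrfi => by rw [hCzero r hrfi t₀]; ring)
            (fun h => absurd (Finset.mem_univ _) h)
        rw [hsingle] at hb
        have hC0 : C t₀ (f i) ≠ 0 := by simp only [csupp, mem_filter] at ht₀i; exact ht₀i.2
        rcases mul_eq_zero.mp hb with h | h
        · exact hC0 h
        · exact ne_of_gt (hv (f i)) h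
      · rw [hptZ t₀ ht₀Z] at hcardge
        have := (hσtype t₀ ht₀Z).2
        omega
    · have : ∑ r, pay r = ∑ r, req r := Finset.sum_congr rfl (fun r _ => heq r)
      rw [hsumreq, hsumpay] at this
      omega


theorem dset {ι : Type*} [Fintype ι] [DecidableEq ι] :
    ∀ (n : ℕ) (W : Submodule ℚ (ι → ℚ)), Module.finrank ℚ W ≤ n →
      ∃ S : Finset ι, S.card ≤ n ∧ ∀ w ∈ W, (∀ i ∈ S, w i = 0) → w = 0 := by
  intro n
  induction n with
  | zero =>
    intro W hW
    refine ⟨∅, le_rfl, fun w hw _ => ?_⟩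
    have : W = ⊥ := by
      have := Submodule.finrank_eq_zero (S := W)
      exact this.mp (Nat.le_zero.mp hW)
    simpa [this] using hw
  | succ n ih =>
    intro W hW
    by_cases hbot : W = ⊥
    · refine ⟨∅, Nat.zero_le _, fun w hw _ => ?_⟩
      simpa [hbot] using hw
    · obtain ⟨w₀, hw₀W, hw₀⟩ := Submodule.exists_mem_ne_zero_of_ne_bot hbot
      obtain ⟨i₀, hi₀⟩ : ∃ i₀, w₀ i₀ ≠ 0 := by
        by_contra h
        push_neg at h
        exact hw₀ (funext h)
      set W' : Submodule ℚ (ι → ℚ) := W ⊓ LinearMap.ker (LinearMap.proj (R := ℚ) (φ := fun _ : ι => ℚ) i₀) with hW'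
      have hlt : W' < W := by
        refine lt_of_le_of_ne inf_le_left ?_
        intro h
        have : w₀ ∈ W' := h ▸ hw₀W
        rw [hW'] at this
        exact hi₀ (this.2)
      have : Module.finrank ℚ W' < Module.finrank ℚ W := Submodule.finrank_lt_finrank_of_lt hlt
      obtain ⟨S', hS'card, hS'⟩ := ih W' (by omega)
      refine ⟨insert i₀ S', ?_, ?_⟩
      · calc (insert i₀ S').card ≤ S'.card + 1 := Finset.card_insert_le _ _
          _ ≤ n + 1 := by omega
      · intro w hw hvan
        have hwi₀ : w i₀ = 0 := hvan i₀ (Finset.mem_insert_self _ _)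
        have hw' : w ∈ W' := ⟨hw, hwi₀⟩
        exact hS' w hw' (fun i hi => hvan i (Finset.mem_insert_of_mem hi))

theorem core_kernel (C : τ → ι → ℚ) (k : τ → ι → ℕ)
    (hl : 3 ≤ Fintype.card τ)
    (H1 : ∀ r, 2 ≤ ∑ t, k t r)
    (H3 : ∀ t r, k t r = 0 → C t r = 0)
    (H3' : ∀ t r, C t r = 0 → k t r ≠ 1)
    (H4 : ∀ t t' : τ, Relation.ReflTransGen (fun a b => ∃ r, k a r ≠ 0 ∧ k b r ≠ 0) t t')
    (v : ι → ℚ) (hv : ∀ r, 0 < v r) (hbal : ∀ t, ∑ r, C t r * v r = 0) :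
    ∃ S : Finset ι, 2 * S.card + Fintype.card τ + 1 ≤ ∑ t, ∑ r, k t r ∧
      ∀ w : ι → ℚ, (∀ t, ∑ r, C t r * w r = 0) → (∀ i ∈ S, w i = 0) → w = 0 := by
  classical
  set M : Matrix τ ι ℚ := Matrix.of C with hM
  have hcore := core C k hl H1 H3 H3' H4 v hv hbal
  have hrange : LinearMap.range M.mulVecLin =
      Submodule.span ℚ (Set.range (fun r => (fun t => C t r) : ι → τ → ℚ)) := by
    rw [Matrix.range_mulVecLin]
    rfl
  have hrn := LinearMap.finrank_range_add_finrank_ker (M.mulVecLin)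
  rw [hrange, Module.finrank_pi] at hrn
  set K := Module.finrank ℚ (LinearMap.ker M.mulVecLin) with hK
  obtain ⟨S, hScard, hSvan⟩ := dset K (LinearMap.ker M.mulVecLin) le_rfl
  refine ⟨S, by omega, ?_⟩
  intro w hw hvan
  have hker : w ∈ LinearMap.ker M.mulVecLin := by
    rw [LinearMap.mem_ker]
    funext t
    have : M.mulVec w t = ∑ r, C t r * w r := by
      simp [Matrix.mulVec, dotProduct, hM]
    simpa [this] using hw t
  exact hSvan w hker hvan

end Aux


noncomputable def bigSet (l : ℕ) (pp : Fin l → ℕ) (b : ℕ) :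
    Finset ((t : Fin l) → Fin (pp t) → ℤ) :=
  (Fintype.piFinset fun t : Fin l => (BFinset b (pp t)).filter Balanced).filter
    (fun T : (∀ t : Fin l, Fin (pp t) → ℤ) =>
      (∀ (t : Fin l) (u : Fin (pp t)),
        2 ≤ ∑ t' : Fin l,
          ((univ.filter fun u' : Fin (pp t') =>
            (T t' u').natAbs = (T t u).natAbs).card)) ∧
      IsCluster T ∧ ∀ (t : Fin l) (u : Fin (pp t)), (T t u).natAbs ≠ 0)

noncomputable def codeOf {l : ℕ} {pp : Fin l → ℕ} (T : (t : Fin l) → Fin (pp t) → ℤ) :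
    ((Σ t, Fin (pp t)) → (Σ t, Fin (pp t)) → Bool) × ((Σ t, Fin (pp t)) → Bool) :=
  (fun x y => decide ((T x.1 x.2).natAbs = (T y.1 y.2).natAbs), fun x => decide (0 < T x.1 x.2))

lemma bigSet_spec {l : ℕ} {pp : Fin l → ℕ} {b : ℕ} {T : (t : Fin l) → Fin (pp t) → ℤ}
    (hT : T ∈ bigSet l pp b) :
    (∀ t, ∑ u, T t u = 0) ∧
    (∀ (t : Fin l) (u : Fin (pp t)), 1 ≤ (T t u).natAbs ∧ ((T t u).natAbs : ℤ) ≤ (b : ℤ)) ∧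
    (∀ (t : Fin l) (u : Fin (pp t)),
        2 ≤ ∑ t' : Fin l, ((univ.filter fun u' : Fin (pp t') =>
          (T t' u').natAbs = (T t u).natAbs).card)) ∧
    IsCluster T := by
  rw [bigSet, Finset.mem_filter] at hT
  obtain ⟨hpi, hmult, hclus, hnz⟩ := hT
  rw [Fintype.mem_piFinset] at hpi
  refine ⟨?_, ?_, hmult, hclus⟩
  · intro t
    have h1 := hpi t
    rw [Finset.mem_filter] at h1
    exact h1.2
  · intro t u
    have h1 := hpi t
    rw [Finset.mem_filter] at h1
    have h2 : T t u ∈ (Finset.Icc (-(b:ℤ)) (b:ℤ)).erase 0 := by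
      have h3 := h1.1
      rw [BFinset, Fintype.mem_piFinset] at h3
      exact h3 u
    rw [Finset.mem_erase, Finset.mem_Icc] at h2
    obtain ⟨hne, hlo, hhi⟩ := h2
    constructor
    · omega
    · omega

set_option maxHeartbeats 1000000 in
lemma fiber_littleO (bn : ℕ → ℕ) (hbinf : Tendsto bn atTop atTop)
    (l : ℕ) (hl : 3 ≤ l) (pp : Fin l → ℕ)
    (π : ((Σ t, Fin (pp t)) → (Σ t, Fin (pp t)) → Bool) × ((Σ t, Fin (pp t)) → Bool)) :
    Asymptotics.IsLittleO atTop
      (fun n : ℕ => (((bigSet l pp (bn n)).filter (fun T => codeOf T = π)).card : ℝ))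
      (fun n : ℕ => (bn n : ℝ) ^ (((∑ t : Fin l, (pp t : ℝ)) - (l : ℝ)) / 2)) := by
  classical
  by_cases hex : ∃ (b : ℕ) (T : (t : Fin l) → Fin (pp t) → ℤ),
      T ∈ (bigSet l pp b).filter (fun T => codeOf T = π)
  case neg =>
    have h0 : ∀ n, (((bigSet l pp (bn n)).filter (fun T => codeOf T = π)).card : ℝ) = 0 := by
      intro n
      rw [Nat.cast_eq_zero, Finset.card_eq_zero, Finset.eq_empty_iff_forall_notMem]
      intro T hT
      exact hex ⟨bn n, T, hT⟩
    rw [Asymptotics.isLittleO_iff]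
    intro c hc
    filter_upwards with n
    rw [h0 n]
    simp only [norm_zero]
    positivity
  case pos =>
  obtain ⟨b₀, T₀, hT₀⟩ := hex
  rw [Finset.mem_filter] at hT₀
  obtain ⟨hT₀mem, hT₀code⟩ := hT₀
  have hcode1 : ∀ {T : (t : Fin l) → Fin (pp t) → ℤ}, codeOf T = π →
      ∀ x y : (Σ t, Fin (pp t)),
        (π.1 x y = true ↔ (T x.1 x.2).natAbs = (T y.1 y.2).natAbs) := by
    intro T hc x y
    rw [← hc]
    simp [codeOf]
  have hcode2 : ∀ {T : (t : Fin l) → Fin (pp t) → ℤ}, codeOf T = π →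
      ∀ x : (Σ t, Fin (pp t)), (π.2 x = true ↔ 0 < T x.1 x.2) := by
    intro T hc x
    rw [← hc]
    simp [codeOf]
  have hrefl : ∀ x, π.1 x x = true := fun x => (hcode1 hT₀code x x).mpr rfl
  have hsymm : ∀ {x y}, π.1 x y = true → π.1 y x = true :=
    fun {x y} h => (hcode1 hT₀code y x).mpr ((hcode1 hT₀code x y).mp h).symm
  have htrans : ∀ {x y z}, π.1 x y = true → π.1 y z = true → π.1 x z = true :=
    fun {x y z} h1 h2 => (hcode1 hT₀code x z).mpr
      (((hcode1 hT₀code x y).mp h1).trans ((hcode1 hT₀code y z).mp h2))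
  set sQ : Setoid (Σ t, Fin (pp t)) :=
    ⟨fun x y => π.1 x y = true, ⟨fun x => hrefl x, hsymm, htrans⟩⟩ with hsQ
  haveI : DecidableEq (Quotient sQ) := Classical.decEq _
  haveI : Fintype (Quotient sQ) :=
    Fintype.ofSurjective (Quotient.mk sQ) (fun q => ⟨q.out, q.out_eq⟩)
  set k : Fin l → Quotient sQ → ℕ :=
    fun t q => (univ.filter (fun u : Fin (pp t) => Quotient.mk sQ ⟨t,u⟩ = q)).card with hk
  set CC : Fin l → Quotient sQ → ℚ :=
    fun t q => ∑ u ∈ univ.filter (fun u : Fin (pp t) => Quotient.mk sQ ⟨t,u⟩ = q),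
      (if π.2 ⟨t,u⟩ then (1:ℚ) else -1) with hCC
  set vA : ((t : Fin l) → Fin (pp t) → ℤ) → Quotient sQ → ℚ :=
    fun T q => ((T q.out.1 q.out.2).natAbs : ℚ) with hvA
  have hval : ∀ {T : (t : Fin l) → Fin (pp t) → ℤ}, codeOf T = π →
      ∀ x : Σ t, Fin (pp t), vA T (Quotient.mk sQ x) = ((T x.1 x.2).natAbs : ℚ) := by
    intro T hc x
    have h1 : sQ ((Quotient.mk sQ x).out) x := Quotient.mk_out x
    have h2 : (T (Quotient.mk sQ x).out.1 (Quotient.mk sQ x).out.2).natAbs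
        = (T x.1 x.2).natAbs := (hcode1 hc _ _).mp h1
    rw [hvA]
    simp only
    rw [h2]
  have hbalQ : ∀ {b : ℕ} {T : (t : Fin l) → Fin (pp t) → ℤ}, T ∈ bigSet l pp b →
      codeOf T = π → ∀ t, ∑ q, CC t q * vA T q = 0 := by
    intro b T hmem hc t
    have hspec := bigSet_spec hmem
    have hterm : ∀ x : Σ t, Fin (pp t),
        (if π.2 x then (1:ℚ) else -1) * ((T x.1 x.2).natAbs : ℚ) = ((T x.1 x.2 : ℤ) : ℚ) := by
      intro x
      by_cases hs : π.2 x = true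
      · have hpos := (hcode2 hc x).mp hs
        rw [if_pos hs, one_mul, Nat.cast_natAbs, abs_of_pos (by exact_mod_cast hpos)]
      · have hnpos : ¬ 0 < T x.1 x.2 := fun h => hs ((hcode2 hc x).mpr h)
        have habs : |T x.1 x.2| = -(T x.1 x.2) := abs_of_nonpos (by omega)
        rw [if_neg hs, Nat.cast_natAbs, habs]
        push_cast
        ring
    calc ∑ q, CC t q * vA T q
        = ∑ q, ∑ u ∈ univ.filter (fun u : Fin (pp t) => Quotient.mk sQ ⟨t,u⟩ = q),
            (if π.2 ⟨t,u⟩ then (1:ℚ) else -1) * vA T q := by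
          refine Finset.sum_congr rfl (fun q _ => ?_)
          rw [hCC]
          simp only
          rw [Finset.sum_mul]
      _ = ∑ q, ∑ u ∈ univ.filter (fun u : Fin (pp t) => Quotient.mk sQ ⟨t,u⟩ = q),
            (if π.2 ⟨t,u⟩ then (1:ℚ) else -1) * vA T (Quotient.mk sQ ⟨t,u⟩) := by
          refine Finset.sum_congr rfl (fun q _ => Finset.sum_congr rfl (fun u hu => ?_))
          rw [Finset.mem_filter] at hu
          rw [hu.2]
      _ = ∑ u : Fin (pp t), (if π.2 ⟨t,u⟩ then (1:ℚ) else -1) *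
            vA T (Quotient.mk sQ ⟨t,u⟩) :=
          Finset.sum_fiberwise _ _ _
      _ = ∑ u : Fin (pp t), ((T t u : ℤ) : ℚ) := by
          refine Finset.sum_congr rfl (fun u _ => ?_)
          rw [hval hc ⟨t,u⟩]
          exact hterm ⟨t,u⟩
      _ = (((∑ u, T t u : ℤ)) : ℚ) := by push_cast; rfl
      _ = 0 := by rw [hspec.1 t]; norm_num
  have hfilter_eq : ∀ (q : Quotient sQ) (t' : Fin l),
      (univ.filter fun u' : Fin (pp t') =>
        (T₀ t' u').natAbs = (T₀ q.out.1 q.out.2).natAbs) =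
      (univ.filter (fun u : Fin (pp t') => Quotient.mk sQ ⟨t',u⟩ = q)) := by
    intro q t'
    apply Finset.filter_congr
    intro u' _
    constructor
    · intro h
      rw [← Quotient.out_eq q]
      exact Quotient.eq.mpr ((hcode1 hT₀code _ _).mpr h)
    · intro h
      have h2 : Quotient.mk sQ (⟨t',u'⟩ : Σ t, Fin (pp t)) = Quotient.mk sQ q.out := by
        rw [h, Quotient.out_eq]
      exact (hcode1 hT₀code _ _).mp (Quotient.eq.mp h2)
  have hH1 : ∀ q : Quotient sQ, 2 ≤ ∑ t, k t q := by
    intro q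
    have hm := (bigSet_spec hT₀mem).2.2.1 q.out.1 q.out.2
    calc (2:ℕ) ≤ _ := hm
      _ = ∑ t, k t q := by
          refine Finset.sum_congr rfl (fun t' _ => ?_)
          rw [hk]
          simp only
          rw [hfilter_eq q t']
  have hH3 : ∀ t q, k t q = 0 → CC t q = 0 := by
    intro t q h0
    rw [hk] at h0
    simp only at h0
    rw [hCC]
    simp only
    rw [Finset.card_eq_zero.mp h0, Finset.sum_empty]
  have hH3' : ∀ t q, CC t q = 0 → k t q ≠ 1 := by
    intro t q hC h1
    rw [hk] at h1
    simp only at h1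
    obtain ⟨u, hu⟩ := Finset.card_eq_one.mp h1
    rw [hCC] at hC
    simp only at hC
    rw [hu, Finset.sum_singleton] at hC
    by_cases hs : π.2 ⟨t,u⟩ = true
    · rw [if_pos hs] at hC; norm_num at hC
    · rw [if_neg hs] at hC; norm_num at hC
  have hH4 : ∀ t t' : Fin l,
      Relation.ReflTransGen (fun a b => ∃ q, k a q ≠ 0 ∧ k b q ≠ 0) t t' := by
    intro t t'
    have hclus := (bigSet_spec hT₀mem).2.2.2
    refine Relation.ReflTransGen.mono ?_ t t' (hclus t t')
    intro a b hab
    obtain ⟨u, w, habs⟩ := hab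
    refine ⟨Quotient.mk sQ ⟨a,u⟩, ?_, ?_⟩
    · rw [hk]
      simp only
      intro h0
      have hmem : u ∈ univ.filter
          (fun u' : Fin (pp a) => Quotient.mk sQ ⟨a,u'⟩ = Quotient.mk sQ ⟨a,u⟩) := by
        rw [Finset.mem_filter]
        exact ⟨Finset.mem_univ _, rfl⟩
      rw [Finset.card_eq_zero.mp h0] at hmem
      simp at hmem
    · rw [hk]
      simp only
      intro h0
      have hmem : w ∈ univ.filter
          (fun u' : Fin (pp b) => Quotient.mk sQ ⟨b,u'⟩ = Quotient.mk sQ ⟨a,u⟩) := by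
        rw [Finset.mem_filter]
        refine ⟨Finset.mem_univ _, Quotient.eq.mpr ?_⟩
        exact (hcode1 hT₀code _ _).mpr habs.symm
      rw [Finset.card_eq_zero.mp h0] at hmem
      simp at hmem
  have hpos : ∀ q, 0 < vA T₀ q := by
    intro q
    rw [hvA]
    simp only
    have h1 := ((bigSet_spec hT₀mem).2.1 q.out.1 q.out.2).1
    have h2 : 0 < (T₀ q.out.1 q.out.2).natAbs := h1
    exact_mod_cast h2
  have hl3 : 3 ≤ Fintype.card (Fin l) := by simpa using hl
  obtain ⟨S, hS1, hS2⟩ := core_kernel CC k hl3 hH1 hH3 hH3' hH4 (vA T₀) hpos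
    (fun t => hbalQ hT₀mem hT₀code t)
  have hNQ : ∑ t, ∑ q, k t q = ∑ t, pp t := by
    refine Finset.sum_congr rfl (fun t _ => ?_)
    have h1 := Finset.card_eq_sum_card_fiberwise (s := (univ : Finset (Fin (pp t))))
      (t := (univ : Finset (Quotient sQ)))
      (f := fun u => Quotient.mk sQ (⟨t,u⟩ : Σ t, Fin (pp t)))
      (fun x _ => Finset.mem_univ _)
    rw [Finset.card_univ, Fintype.card_fin] at h1
    rw [← h1]
  have hcount : ∀ b : ℕ,
      ((bigSet l pp b).filter (fun T => codeOf T = π)).card ≤ b ^ S.card := by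
    intro b
    have hmaps : ∀ T ∈ (bigSet l pp b).filter (fun T => codeOf T = π),
        (fun i : {x // x ∈ S} => ((T (i : Quotient sQ).out.1 (i : Quotient sQ).out.2).natAbs : ℤ))
          ∈ Fintype.piFinset (fun _ : {x // x ∈ S} => Finset.Icc (1:ℤ) (b:ℤ)) := by
      intro T hT
      rw [Finset.mem_filter] at hT
      rw [Fintype.mem_piFinset]
      intro i
      rw [Finset.mem_Icc]
      have := (bigSet_spec hT.1).2.1 (i : Quotient sQ).out.1 (i : Quotient sQ).out.2
      omega
    have hinj : Set.InjOn
        (fun T : (t : Fin l) → Fin (pp t) → ℤ =>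
          (fun i : {x // x ∈ S} => ((T (i : Quotient sQ).out.1 (i : Quotient sQ).out.2).natAbs : ℤ)))
        ((bigSet l pp b).filter (fun T => codeOf T = π)) := by
      intro T hT T' hT' heq2
      rw [Finset.mem_coe, Finset.mem_filter] at hT hT'
      obtain ⟨hTmem, hTcode⟩ := hT
      obtain ⟨hT'mem, hT'code⟩ := hT'
      set w : Quotient sQ → ℚ := fun q => vA T q - vA T' q with hw
      have hwbal : ∀ t, ∑ q, CC t q * w q = 0 := by
        intro t
        have h1 := hbalQ hTmem hTcode t
        have h2 := hbalQ hT'mem hT'code t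
        calc ∑ q, CC t q * w q = ∑ q, (CC t q * vA T q - CC t q * vA T' q) := by
              refine Finset.sum_congr rfl (fun q _ => ?_)
              rw [hw]
              ring
          _ = 0 := by rw [Finset.sum_sub_distrib, h1, h2]; ring
      have hwvan : ∀ i ∈ S, w i = 0 := by
        intro i hi
        have h3 := congrFun heq2 (⟨i, hi⟩ : {x // x ∈ S})
        simp only at h3
        rw [hw]
        simp only
        rw [hvA]
        simp only
        rw [sub_eq_zero]
        exact_mod_cast h3
      have hw0 : w = 0 := hS2 w hwbal hwvan
      have hveq : ∀ q, vA T q = vA T' q := by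
        intro q
        have h0 : vA T q - vA T' q = 0 := by
          have := congrFun hw0 q
          simpa [hw] using this
        linarith
      funext t u
      have habs : (T t u).natAbs = (T' t u).natAbs := by
        have h1 := hval hTcode ⟨t,u⟩
        have h2 := hval hT'code ⟨t,u⟩
        have h3 := hveq (Quotient.mk sQ ⟨t,u⟩)
        rw [h1, h2] at h3
        exact_mod_cast h3
      have hsgn1 := hcode2 hTcode ⟨t,u⟩
      have hsgn2 := hcode2 hT'code ⟨t,u⟩
      by_cases hs : π.2 ⟨t,u⟩ = true
      · have p1 := hsgn1.mp hs
        have p2 := hsgn2.mp hs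
        simp only at p1 p2
        omega
      · have p1 : ¬ 0 < T t u := fun h => hs (hsgn1.mpr h)
        have p2 : ¬ 0 < T' t u := fun h => hs (hsgn2.mpr h)
        omega
    calc ((bigSet l pp b).filter (fun T => codeOf T = π)).card
        ≤ (Fintype.piFinset (fun _ : {x // x ∈ S} => Finset.Icc (1:ℤ) (b:ℤ))).card :=
          Finset.card_le_card_of_injOn _ hmaps hinj
      _ = b ^ S.card := by
          rw [Fintype.card_piFinset]
          simp only [Int.card_Icc]
          rw [Finset.prod_const]
          congr 1
          · simp
          · rw [Finset.card_univ, Fintype.card_coe]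
  have hexp : 2 * S.card + l + 1 ≤ ∑ t, pp t := by
    rw [← hNQ]
    calc 2 * S.card + l + 1 = 2 * S.card + Fintype.card (Fin l) + 1 := by
          rw [Fintype.card_fin]
      _ ≤ _ := hS1
  rw [Asymptotics.isLittleO_iff]
  intro c hc
  have hev1 : ∀ᶠ n in atTop, 1 ≤ bn n := hbinf.eventually_ge_atTop 1
  have hev2 : ∀ᶠ n in atTop, Nat.ceil ((c⁻¹)^2) ≤ bn n := hbinf.eventually_ge_atTop _
  filter_upwards [hev1, hev2] with n hb1 hb2
  have hb1' : (1:ℝ) ≤ (bn n : ℝ) := by exact_mod_cast hb1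
  have hbpos : (0:ℝ) < (bn n : ℝ) := by linarith
  have hbc : (c⁻¹)^2 ≤ (bn n : ℝ) :=
    le_trans (Nat.le_ceil _) (by exact_mod_cast hb2)
  rw [Real.norm_of_nonneg (by positivity), Real.norm_of_nonneg (Real.rpow_nonneg hbpos.le _)]
  have hcard : (((bigSet l pp (bn n)).filter (fun T => codeOf T = π)).card : ℝ)
      ≤ ((bn n : ℝ)) ^ (S.card : ℕ) := by exact_mod_cast hcount (bn n)
  have h2 : ((S.card : ℕ) : ℝ) ≤ (((∑ t : Fin l, (pp t : ℝ)) - (l : ℝ)) / 2) - 1/2 := by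
    have hcast : (∑ t : Fin l, (pp t:ℝ)) = ((∑ t, pp t : ℕ) : ℝ) := by push_cast; rfl
    rw [hcast]
    have : (2 * S.card + l + 1 : ℝ) ≤ ((∑ t, pp t : ℕ) : ℝ) := by exact_mod_cast hexp
    push_cast at this ⊢
    linarith
  have h3 : ((bn n : ℝ)) ^ ((S.card : ℕ) : ℝ)
      ≤ ((bn n : ℝ)) ^ ((((∑ t : Fin l, (pp t : ℝ)) - (l : ℝ)) / 2) - 1/2) :=
    Real.rpow_le_rpow_of_exponent_le hb1' h2
  have h4 : ((bn n : ℝ)) ^ ((((∑ t : Fin l, (pp t : ℝ)) - (l : ℝ)) / 2) - 1/2)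
      = ((bn n : ℝ)) ^ (((∑ t : Fin l, (pp t : ℝ)) - (l : ℝ)) / 2) * ((bn n : ℝ)) ^ (-(1/2) : ℝ) := by
    rw [← Real.rpow_add hbpos]
    ring_nf
  have h5 : ((bn n : ℝ)) ^ (-(1/2) : ℝ) ≤ c := by
    have hsq : c⁻¹ ≤ Real.sqrt (bn n : ℝ) := by
      rw [Real.le_sqrt (by positivity) hbpos.le]
      exact hbc
    have hs2 : Real.sqrt (bn n : ℝ) = ((bn n : ℝ)) ^ ((1:ℝ)/2) := Real.sqrt_eq_rpow _
    have hpos2 : (0:ℝ) < ((bn n : ℝ)) ^ ((1:ℝ)/2) := Real.rpow_pos_of_pos hbpos _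
    rw [Real.rpow_neg hbpos.le]
    rw [inv_le_comm₀ hpos2 hc]
    rw [← hs2]
    exact hsq
  calc (((bigSet l pp (bn n)).filter (fun T => codeOf T = π)).card : ℝ)
      ≤ ((bn n : ℝ)) ^ (S.card : ℕ) := hcard
    _ = ((bn n : ℝ)) ^ ((S.card : ℕ) : ℝ) := (Real.rpow_natCast _ _).symm
    _ ≤ ((bn n : ℝ)) ^ ((((∑ t : Fin l, (pp t : ℝ)) - (l : ℝ)) / 2) - 1/2) := h3
    _ = ((bn n : ℝ)) ^ (((∑ t : Fin l, (pp t : ℝ)) - (l : ℝ)) / 2) * ((bn n : ℝ)) ^ (-(1/2) : ℝ) := h4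
    _ ≤ ((bn n : ℝ)) ^ (((∑ t : Fin l, (pp t : ℝ)) - (l : ℝ)) / 2) * c := by
        apply mul_le_mul_of_nonneg_left h5 (Real.rpow_nonneg hbpos.le _)
    _ = c * ((bn n : ℝ)) ^ (((∑ t : Fin l, (pp t : ℝ)) - (l : ℝ)) / 2) := by ring

/-- Lemma 5.3: the number of `l`-tuples `(J_1, …, J_l)` of balanced vectors
with (i) every absolute value occurring with multiplicity at least two in the union of the
projections, (ii) the vectors forming a single cluster, and (iii) `0` not occurring, is
`o(b_n^{(p_1 + ⋯ + p_l - l)/2})`. -/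
theorem cluster_count_lemma
    (bn : ℕ → ℕ) (hbinf : Tendsto bn atTop atTop)
    (l : ℕ) (hl : 3 ≤ l) (pp : Fin l → ℕ) (hpp : ∀ t, 2 ≤ pp t) :
    Asymptotics.IsLittleO atTop
      (fun n : ℕ =>
        (((Fintype.piFinset fun t : Fin l =>
              (BFinset (bn n) (pp t)).filter Balanced).filter
            (fun T : (∀ t : Fin l, Fin (pp t) → ℤ) =>
              (∀ (t : Fin l) (u : Fin (pp t)),
                2 ≤ ∑ t' : Fin l,
                  ((univ.filter fun u' : Fin (pp t') =>
                    (T t' u').natAbs = (T t u).natAbs).card)) ∧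
              IsCluster T ∧ ∀ (t : Fin l) (u : Fin (pp t)), (T t u).natAbs ≠ 0)).card : ℝ))
      (fun n : ℕ => (bn n : ℝ) ^ (((∑ t : Fin l, (pp t : ℝ)) - (l : ℝ)) / 2)) := by
  classical
  have heq : (fun n : ℕ =>
      (((Fintype.piFinset fun t : Fin l =>
            (BFinset (bn n) (pp t)).filter Balanced).filter
          (fun T : (∀ t : Fin l, Fin (pp t) → ℤ) =>
            (∀ (t : Fin l) (u : Fin (pp t)),
              2 ≤ ∑ t' : Fin l,
                ((univ.filter fun u' : Fin (pp t') =>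
                  (T t' u').natAbs = (T t u).natAbs).card)) ∧
            IsCluster T ∧ ∀ (t : Fin l) (u : Fin (pp t)), (T t u).natAbs ≠ 0)).card : ℝ)) =
      (fun n : ℕ => ∑ π : ((Σ t, Fin (pp t)) → (Σ t, Fin (pp t)) → Bool) × ((Σ t, Fin (pp t)) → Bool),
        (((bigSet l pp (bn n)).filter (fun T => codeOf T = π)).card : ℝ)) := by
    funext n
    have h1 : ((Fintype.piFinset fun t : Fin l =>
            (BFinset (bn n) (pp t)).filter Balanced).filter
          (fun T : (∀ t : Fin l, Fin (pp t) → ℤ) =>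
            (∀ (t : Fin l) (u : Fin (pp t)),
              2 ≤ ∑ t' : Fin l,
                ((univ.filter fun u' : Fin (pp t') =>
                  (T t' u').natAbs = (T t u).natAbs).card)) ∧
            IsCluster T ∧ ∀ (t : Fin l) (u : Fin (pp t)), (T t u).natAbs ≠ 0)) =
        bigSet l pp (bn n) := rfl
    rw [h1, Finset.card_eq_sum_card_fiberwise
      (f := fun T => codeOf T) (t := (univ : Finset _)) (fun T _ => Finset.mem_univ _)]
    push_cast
    rfl
  rw [heq]
  exact Asymptotics.IsLittleO.fun_sum (fun π _ => fiber_littleO bn hbinf l hl pp π)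


end RTM
end
end

section
/- Let H_n = P_n T_n be the Hankel band matrix associated to the Toeplitz band matrix T_n = (η_{ij} a_{i-j})_{i,j=1}^n with bandwidth b_n and real entries a_{-n+1},…,a_{n-1}, where P_n = (δ_{i-1,n-j})_{i,j=1}^n. Then for even p, tr(H_n^p) = Σ_{i=1}^n Σ_{j_1,…,j_p=-b_n}^{b_n} (∏_{l=1}^p a_{j_l}) (∏_{l=1}^p χ_{[1,n]}(i − Σ_{q=1}^l (−1)^q j_q)) δ_{0, Σ_{q=1}^p (−1)^q j_q}; and for odd p, tr(H_n^p) = Σ_{i=1}^n Σ_{j_1,…,j_p=-b_n}^{b_n} (∏_{l=1}^p a_{j_l}) (∏_{l=1}^p χ_{[1,n]}(i − Σ_{q=1}^l (−1)^q j_q)) δ_{2i−1−n, Σ_{q=1}^p (−1)^q j_q}. -/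
open MeasureTheory Finset Filter ProbabilityTheory Topology
open scoped Classical Topology

noncomputable section

namespace RTM

/-- The "backward identity" permutation matrix `P_n = (δ_{i-1,n-j})_{i,j=1}^n`. -/
def backId (n : ℕ) : Matrix (Fin n) (Fin n) ℝ :=
  Matrix.of fun i j => if (i : ℕ) + (j : ℕ) + 1 = n then 1 else 0

/-! ### Auxiliary material for the trace formula -/

/-- Alternating partial sum `∑_{u < c} (-1)^{u+1} J u`. -/
def Ssum (p : ℕ) (J : Fin p → ℤ) (c : ℕ) : ℤ :=
  ∑ u ∈ univ.filter (fun u : Fin p => (u : ℕ) < c), (-1 : ℤ) ^ ((u : ℕ) + 1) * J u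

/-- The (1-indexed) position after `p` steps, starting at `I`. -/
def gpos (n p : ℕ) (I : ℤ) (J : Fin p → ℤ) : ℤ :=
  if Even p then I - Ssum p J p else (n : ℤ) + 1 - I + Ssum p J p

/-- Indicator of `[1, n]` in `ℤ`, real-valued. -/
def chiI (n : ℕ) (x : ℤ) : ℝ := if 1 ≤ x ∧ x ≤ (n : ℤ) then 1 else 0

/-- The value of the Hankel band matrix at 1-indexed position `(M, K)`. -/
def Fval (n bn : ℕ) (a : ℤ → ℝ) (K M : ℤ) : ℝ :=
  if |(n : ℤ) - M - K + 1| ≤ (bn : ℤ) then a ((n : ℤ) - M - K + 1) else 0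

lemma Ssum_self (p : ℕ) (J : Fin p → ℤ) :
    Ssum p J p = ∑ u : Fin p, (-1 : ℤ) ^ ((u : ℕ) + 1) * J u := by
  unfold Ssum
  rw [Finset.filter_true_of_mem (fun u _ => u.isLt)]

lemma Ssum_snoc (p : ℕ) (J : Fin p → ℤ) (j : ℤ) (c : ℕ) (hc : c ≤ p) :
    Ssum (p + 1) (Fin.snoc J j) c = Ssum p J c := by
  unfold Ssum
  rw [Finset.sum_filter, Finset.sum_filter, Fin.sum_univ_castSucc]
  simp only [Fin.snoc_castSucc, Fin.coe_castSucc, Fin.snoc_last, Fin.val_last]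
  rw [if_neg (by omega), add_zero]

lemma Ssum_top (p : ℕ) (J : Fin p → ℤ) (j : ℤ) :
    Ssum (p + 1) (Fin.snoc J j : Fin (p + 1) → ℤ) (p + 1) = Ssum p J p + (-1 : ℤ) ^ (p + 1) * j := by
  rw [Ssum_self, Fin.sum_univ_castSucc, Ssum_self]
  simp only [Fin.snoc_castSucc, Fin.coe_castSucc, Fin.snoc_last, Fin.val_last]

lemma gpos_snoc (n p : ℕ) (I : ℤ) (J : Fin p → ℤ) (j : ℤ) :
    gpos n (p + 1) I (Fin.snoc J j : Fin (p + 1) → ℤ) = (n : ℤ) + 1 - gpos n p I J - j := by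
  unfold gpos
  rw [Ssum_top]
  rcases Nat.even_or_odd p with h | h
  · rw [if_neg (by rw [Nat.even_add_one]; exact not_not.mpr h), if_pos h,
      Odd.neg_one_pow h.add_one]
    ring
  · have h0 : ¬ Even p := Nat.not_even_iff_odd.mpr h
    rw [if_pos (Nat.even_add_one.mpr h0), if_neg h0, Even.neg_one_pow h.add_one]
    ring

lemma gpos_mem_iff (n p : ℕ) (I : ℤ) (J : Fin p → ℤ) :
    (1 ≤ I - Ssum p J p ∧ I - Ssum p J p ≤ (n : ℤ)) ↔
      (1 ≤ gpos n p I J ∧ gpos n p I J ≤ (n : ℤ)) := by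
  unfold gpos
  split <;> omega

lemma hb_apply (n bn : ℕ) (a : ℤ → ℝ) (m k : Fin n) :
    (backId n * toeplitzBand n bn a) m k =
      Fval n bn a (((k : ℕ) : ℤ) + 1) (((m : ℕ) : ℤ) + 1) := by
  have hm : (m : ℕ) < n := m.isLt
  have hk : (k : ℕ) < n := k.isLt
  rw [Matrix.mul_apply]
  rw [Finset.sum_eq_single (⟨n - 1 - (m : ℕ), by omega⟩ : Fin n)]
  · simp only [backId, toeplitzBand, Matrix.of_apply]
    rw [if_pos (by show (m : ℕ) + (n - 1 - (m : ℕ)) + 1 = n; omega), one_mul]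
    have h1 : ((((⟨n - 1 - (m : ℕ), by omega⟩ : Fin n) : ℕ)) : ℤ) - ((k : ℕ) : ℤ)
        = (n : ℤ) - (((m : ℕ) : ℤ) + 1) - (((k : ℕ) : ℤ) + 1) + 1 := by
      show (((n - 1 - (m : ℕ) : ℕ)) : ℤ) - ((k : ℕ) : ℤ) = _
      omega
    rw [Fval, h1]
  · intro b _ hb
    simp only [backId, Matrix.of_apply]
    rw [if_neg, zero_mul]
    intro hc
    apply hb
    apply Fin.ext
    show (b : ℕ) = n - 1 - (m : ℕ)
    omega
  · intro h
    exact absurd (Finset.mem_univ _) h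

lemma sum_fin_pick (n : ℕ) (g : ℤ) (F : ℤ → ℝ) :
    (∑ m : Fin n, (if ((m : ℕ) : ℤ) + 1 = g then (1 : ℝ) else 0) * F (((m : ℕ) : ℤ) + 1)) =
      if 1 ≤ g ∧ g ≤ (n : ℤ) then F g else 0 := by
  by_cases hg : 1 ≤ g ∧ g ≤ (n : ℤ)
  · rw [if_pos hg]
    obtain ⟨h1, h2⟩ := hg
    rw [Finset.sum_eq_single (⟨(g - 1).toNat, by omega⟩ : Fin n)]
    · have hv : ((((⟨(g - 1).toNat, by omega⟩ : Fin n) : ℕ)) : ℤ) + 1 = g := by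
        show (((g - 1).toNat : ℕ) : ℤ) + 1 = g
        omega
      rw [hv, if_pos rfl, one_mul]
    · intro b _ hb
      rw [if_neg, zero_mul]
      intro hc
      apply hb
      apply Fin.ext
      show (b : ℕ) = (g - 1).toNat
      omega
    · intro h
      exact absurd (Finset.mem_univ _) h
  · rw [if_neg hg]
    apply Finset.sum_eq_zero
    intro m _
    have := m.isLt
    rw [if_neg (by omega), zero_mul]

lemma sum_piFinset_snoc {M : Type*} [AddCommMonoid M] (p : ℕ) (s : Finset ℤ)
    (f : (Fin (p + 1) → ℤ) → M) :
    ∑ J ∈ Fintype.piFinset (fun _ : Fin (p + 1) => s), f J =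
      ∑ J ∈ Fintype.piFinset (fun _ : Fin p => s), ∑ j ∈ s, f (Fin.snoc J j) := by
  rw [← Finset.sum_product']
  apply Finset.sum_nbij' (i := fun J => (Fin.init J, J (Fin.last p)))
    (j := fun Jj : (Fin p → ℤ) × ℤ => Fin.snoc Jj.1 Jj.2)
  · intro J hJ
    simp only [Finset.mem_product, Fintype.mem_piFinset] at *
    exact ⟨fun u => hJ _, hJ _⟩
  · intro Jj hJj
    simp only [Finset.mem_product, Fintype.mem_piFinset] at *
    intro u
    refine Fin.lastCases ?_ ?_ u
    · simpa using hJj.2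
    · intro v; simpa using hJj.1 v
  · intro J _
    exact Fin.snoc_init_self J
  · intro Jj _
    simp
  · intro J _
    rw [Fin.snoc_init_self J]

lemma guard_drop (n p : ℕ) (hn : 0 < n) (I : ℤ) (hI : 1 ≤ I ∧ I ≤ (n : ℤ))
    (J : Fin p → ℤ) (X : ℝ) :
    (∏ l ∈ range p, chiI n (I - Ssum p J (l + 1))) *
        (if 1 ≤ gpos n p I J ∧ gpos n p I J ≤ (n : ℤ) then X else 0) =
      (∏ l ∈ range p, chiI n (I - Ssum p J (l + 1))) * X := by
  by_cases hg : 1 ≤ gpos n p I J ∧ gpos n p I J ≤ (n : ℤ)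
  · rw [if_pos hg]
  · rw [if_neg hg]
    have hP : (∏ l ∈ range p, chiI n (I - Ssum p J (l + 1))) = 0 := by
      cases p with
      | zero =>
        exfalso
        apply hg
        unfold gpos Ssum
        rw [if_pos Even.zero]
        rw [show (univ.filter fun u : Fin 0 => (u : ℕ) < 0) = (∅ : Finset (Fin 0)) from
          Finset.eq_empty_of_isEmpty _, Finset.sum_empty]
        omega
      | succ q =>
        apply Finset.prod_eq_zero (Finset.self_mem_range_succ q)
        unfold chiI
        rw [if_neg]
        intro hc
        exact hg ((gpos_mem_iff n (q + 1) I J).mp hc)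
    rw [hP, zero_mul, zero_mul]

lemma entry_formula (n bn : ℕ) (hbn : bn < n) (a : ℤ → ℝ) (p : ℕ) (i k : Fin n) :
    ((backId n * toeplitzBand n bn a) ^ p) i k =
      ∑ J ∈ Fintype.piFinset (fun _ : Fin p => Finset.Icc (-(bn : ℤ)) (bn : ℤ)),
        (∏ l : Fin p, a (J l)) *
          (∏ l ∈ range p, chiI n (((i : ℕ) : ℤ) + 1 - Ssum p J (l + 1))) *
          (if ((k : ℕ) : ℤ) + 1 = gpos n p (((i : ℕ) : ℤ) + 1) J then (1 : ℝ) else 0) := by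
  have hn : 0 < n := by omega
  induction p generalizing k with
  | zero =>
    rw [pow_zero, Matrix.one_apply]
    have hpi : Fintype.piFinset (fun _ : Fin 0 => Finset.Icc (-(bn : ℤ)) (bn : ℤ))
        = {Fin.elim0} := by
      ext f
      simp only [Fintype.mem_piFinset, Finset.mem_singleton]
      constructor
      · intro _; funext x; exact x.elim0
      · intro _ x; exact x.elim0
    rw [hpi, Finset.sum_singleton]
    have hg : gpos n 0 (((i : ℕ) : ℤ) + 1) Fin.elim0 = ((i : ℕ) : ℤ) + 1 := by
      unfold gpos Ssum
      rw [if_pos Even.zero]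
      rw [show (univ.filter fun u : Fin 0 => (u : ℕ) < 0) = (∅ : Finset (Fin 0)) from
        Finset.eq_empty_of_isEmpty _, Finset.sum_empty]
      ring
    rw [hg]
    simp only [Finset.univ_eq_empty, Finset.prod_empty, Finset.range_zero, one_mul]
    by_cases h : i = k
    · subst h; simp
    · rw [if_neg h, if_neg]
      intro hc
      apply h
      apply Fin.ext
      omega
  | succ p ih =>
    set I : ℤ := ((i : ℕ) : ℤ) + 1 with hI
    set K : ℤ := ((k : ℕ) : ℤ) + 1 with hK
    rw [pow_succ, Matrix.mul_apply]
    have step1 : ∀ m : Fin n,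
        ((backId n * toeplitzBand n bn a) ^ p) i m * (backId n * toeplitzBand n bn a) m k =
          ∑ J ∈ Fintype.piFinset (fun _ : Fin p => Finset.Icc (-(bn : ℤ)) (bn : ℤ)),
            ((∏ l : Fin p, a (J l)) *
              (∏ l ∈ range p, chiI n (I - Ssum p J (l + 1)))) *
            ((if ((m : ℕ) : ℤ) + 1 = gpos n p I J then (1 : ℝ) else 0) *
              Fval n bn a K (((m : ℕ) : ℤ) + 1)) := by
      intro m
      rw [ih m, hb_apply n bn a m k, Finset.sum_mul]
      apply Finset.sum_congr rfl
      intro J _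
      ring
    rw [Finset.sum_congr rfl (fun m _ => step1 m), Finset.sum_comm]
    have step2 : ∀ J ∈ Fintype.piFinset (fun _ : Fin p => Finset.Icc (-(bn : ℤ)) (bn : ℤ)),
        (∑ m : Fin n,
          ((∏ l : Fin p, a (J l)) * (∏ l ∈ range p, chiI n (I - Ssum p J (l + 1)))) *
            ((if ((m : ℕ) : ℤ) + 1 = gpos n p I J then (1 : ℝ) else 0) *
              Fval n bn a K (((m : ℕ) : ℤ) + 1))) =
          ((∏ l : Fin p, a (J l)) * (∏ l ∈ range p, chiI n (I - Ssum p J (l + 1)))) *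
            Fval n bn a K (gpos n p I J) := by
      intro J _
      rw [← Finset.mul_sum, sum_fin_pick n (gpos n p I J) (Fval n bn a K)]
      rw [mul_assoc, guard_drop n p hn I (by constructor <;> [omega; (have := i.isLt; omega)]) J]
      ring
    rw [Finset.sum_congr rfl step2]
    rw [sum_piFinset_snoc]
    symm
    apply Finset.sum_congr rfl
    intro J hJ
    have step3 : ∀ j : ℤ,
        (∏ l : Fin (p + 1), a ((Fin.snoc J j : Fin (p + 1) → ℤ) l)) = (∏ l : Fin p, a (J l)) * a j := by
      intro j
      rw [Fin.prod_univ_castSucc]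
      simp only [Fin.snoc_castSucc, Fin.snoc_last]
    have step4 : ∀ j : ℤ,
        (∏ l ∈ range (p + 1), chiI n (I - Ssum (p + 1) (Fin.snoc J j : Fin (p + 1) → ℤ) (l + 1))) =
          (∏ l ∈ range p, chiI n (I - Ssum p J (l + 1))) *
            chiI n (I - Ssum (p + 1) (Fin.snoc J j : Fin (p + 1) → ℤ) (p + 1)) := by
      intro j
      rw [Finset.prod_range_succ]
      congr 1
      apply Finset.prod_congr rfl
      intro l hl
      rw [Ssum_snoc p J j (l + 1) (by simpa using Finset.mem_range.mp hl)]
    calc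
      ∑ j ∈ Finset.Icc (-(bn : ℤ)) (bn : ℤ),
          (∏ l : Fin (p + 1), a ((Fin.snoc J j : Fin (p + 1) → ℤ) l)) *
            (∏ l ∈ range (p + 1), chiI n (I - Ssum (p + 1) (Fin.snoc J j : Fin (p + 1) → ℤ) (l + 1))) *
            (if K = gpos n (p + 1) I (Fin.snoc J j : Fin (p + 1) → ℤ) then (1 : ℝ) else 0)
        = ∑ j ∈ Finset.Icc (-(bn : ℤ)) (bn : ℤ),
            (if (n : ℤ) - gpos n p I J - K + 1 = j then
              ((∏ l : Fin p, a (J l)) * a j *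
                ((∏ l ∈ range p, chiI n (I - Ssum p J (l + 1))) *
                  chiI n (I - Ssum (p + 1) (Fin.snoc J j : Fin (p + 1) → ℤ) (p + 1)))) else 0) := by
          apply Finset.sum_congr rfl
          intro j _
          rw [step3 j, step4 j, gpos_snoc]
          by_cases hj : (n : ℤ) - gpos n p I J - K + 1 = j
          · rw [if_pos hj, if_pos (by omega), mul_one]
          · rw [if_neg hj, if_neg (by omega), mul_zero]
      _ = ((∏ l : Fin p, a (J l)) * (∏ l ∈ range p, chiI n (I - Ssum p J (l + 1)))) *
            Fval n bn a K (gpos n p I J) := by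
          rw [Finset.sum_ite_eq]
          unfold Fval
          by_cases hmem : (n : ℤ) - gpos n p I J - K + 1 ∈ Finset.Icc (-(bn : ℤ)) (bn : ℤ)
          · rw [if_pos hmem, if_pos (by rw [abs_le]; exact Finset.mem_Icc.mp hmem)]
            have hchi : chiI n (I - Ssum (p + 1)
                (Fin.snoc J ((n : ℤ) - gpos n p I J - K + 1)) (p + 1)) = 1 := by
              unfold chiI
              rw [if_pos]
              apply (gpos_mem_iff n (p + 1) I (Fin.snoc J ((n : ℤ) - gpos n p I J - K + 1))).mpr
              rw [gpos_snoc]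
              have := k.isLt
              constructor <;> omega
            rw [hchi, mul_one]
            ring
          · rw [if_neg hmem, if_neg (by rw [abs_le]; intro hc; exact hmem (Finset.mem_Icc.mpr hc)),
              mul_zero]

/-- Lemma 6.3, trace formula for Hankel band matrices `H_n = P_n T_n`. -/
theorem trace_formula_hankel_band (n bn p : ℕ) (hbn : bn < n) (a : ℤ → ℝ) :
    (Even p →
      Matrix.trace ((backId n * toeplitzBand n bn a) ^ p) =
        ∑ i ∈ Finset.Icc (1 : ℤ) (n : ℤ),
          ∑ J ∈ Fintype.piFinset fun _ : Fin p => Finset.Icc (-(bn : ℤ)) (bn : ℤ),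
            (∏ l : Fin p, a (J l)) *
              (∏ l ∈ range p,
                if 1 ≤ i - (∑ u ∈ univ.filter (fun u : Fin p => (u : ℕ) < l + 1),
                      (-1 : ℤ) ^ ((u : ℕ) + 1) * J u) ∧
                    i - (∑ u ∈ univ.filter (fun u : Fin p => (u : ℕ) < l + 1),
                      (-1 : ℤ) ^ ((u : ℕ) + 1) * J u) ≤ (n : ℤ)
                  then (1 : ℝ) else 0) *
              (if (∑ u : Fin p, (-1 : ℤ) ^ ((u : ℕ) + 1) * J u) = 0 then (1 : ℝ) else 0)) ∧
    (Odd p →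
      Matrix.trace ((backId n * toeplitzBand n bn a) ^ p) =
        ∑ i ∈ Finset.Icc (1 : ℤ) (n : ℤ),
          ∑ J ∈ Fintype.piFinset fun _ : Fin p => Finset.Icc (-(bn : ℤ)) (bn : ℤ),
            (∏ l : Fin p, a (J l)) *
              (∏ l ∈ range p,
                if 1 ≤ i - (∑ u ∈ univ.filter (fun u : Fin p => (u : ℕ) < l + 1),
                      (-1 : ℤ) ^ ((u : ℕ) + 1) * J u) ∧
                    i - (∑ u ∈ univ.filter (fun u : Fin p => (u : ℕ) < l + 1),
                      (-1 : ℤ) ^ ((u : ℕ) + 1) * J u) ≤ (n : ℤ)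
                  then (1 : ℝ) else 0) *
              (if (∑ u : Fin p, (-1 : ℤ) ^ ((u : ℕ) + 1) * J u) = 2 * i - 1 - n
                then (1 : ℝ) else 0)) := by
  have hn : 0 < n := by omega
  have key : Matrix.trace ((backId n * toeplitzBand n bn a) ^ p) =
      ∑ i ∈ Finset.Icc (1 : ℤ) (n : ℤ),
        ∑ J ∈ Fintype.piFinset fun _ : Fin p => Finset.Icc (-(bn : ℤ)) (bn : ℤ),
          (∏ l : Fin p, a (J l)) *
            (∏ l ∈ range p, chiI n (i - Ssum p J (l + 1))) *
            (if i = gpos n p i J then (1 : ℝ) else 0) := by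
    simp only [Matrix.trace, Matrix.diag]
    rw [Finset.sum_congr rfl (fun i _ => entry_formula n bn hbn a p i i)]
    apply Finset.sum_nbij (i := fun i : Fin n => ((i : ℕ) : ℤ) + 1)
    · intro i _
      have := i.isLt
      simp only [Finset.mem_Icc]
      omega
    · intro x _ y _ hxy
      apply Fin.ext
      simp only at hxy
      omega
    · intro I hI
      simp only [Finset.coe_Icc, Set.mem_Icc] at hI
      refine ⟨⟨(I - 1).toNat, by omega⟩, by simp, ?_⟩
      show (((I - 1).toNat : ℕ) : ℤ) + 1 = I
      omega
    · intro i _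
      rfl
  constructor
  · intro hp
    rw [key]
    apply Finset.sum_congr rfl
    intro i _
    apply Finset.sum_congr rfl
    intro J _
    congr 1
    unfold gpos
    rw [if_pos hp, Ssum_self]
    by_cases h : (∑ u : Fin p, (-1 : ℤ) ^ ((u : ℕ) + 1) * J u) = 0
    · rw [if_pos h, if_pos (by omega)]
    · rw [if_neg h, if_neg (by omega)]
  · intro hp
    have hep : ¬ Even p := by
      intro he
      exact (Nat.not_odd_iff_even.mpr he) hp
    rw [key]
    apply Finset.sum_congr rfl
    intro i _
    apply Finset.sum_congr rfl
    intro J _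
    congr 1
    unfold gpos
    rw [if_neg hep, Ssum_self]
    by_cases h : (∑ u : Fin p, (-1 : ℤ) ^ ((u : ℕ) + 1) * J u) = 2 * i - 1 - n
    · rw [if_pos h, if_pos (by omega)]
    · rw [if_neg h, if_neg (by omega)]

end RTM
end
end
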